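/- arXiv:1912.01529 — 5 statements merged into one kernel-verified Lean document; each statement's English description precedes it below -/
import Mathlib

section
/- Let (W,S) be an irreducible, infinite Coxeter system of rank n, and let I, J ⊆ S with |I| = |J| = n−1. Then the standard parabolic subgroups W_I and W_J are conjugate in W if and only if I = J. -/
open List Real

namespace CoxProof

variable {B : Type*} {W : Type*} [Group W] {M : CoxeterMatrix B}

/-- entry of the bilinear form -/
noncomputable def km (M : CoxeterMatrix B) (i j : B) : ℝ :=
  if M i j = 0 then -1 else -Real.cos (Real.pi / (M i j : ℝ))

lemma km_diag (i : B) : km M i i = 1 := by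
  simp [km, M.diagonal i]

lemma km_symm (i j : B) : km M i j = km M j i := by
  rw [km, km, M.symmetric i j]

lemma two_le_M (i j : B) (h : i ≠ j) (h0 : M i j ≠ 0) : 2 ≤ M i j := by
  have := M.off_diagonal i j h
  omega

lemma km_nonpos (i j : B) (h : i ≠ j) : km M i j ≤ 0 := by
  rw [km]
  split
  · norm_num
  · rename_i h0
    have h2 : (2:ℝ) ≤ (M i j : ℝ) := by exact_mod_cast two_le_M i j h h0
    have hpos : 0 ≤ Real.cos (Real.pi / (M i j : ℝ)) := by
      apply Real.cos_nonneg_of_mem_Icc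
      constructor
      · have : 0 ≤ Real.pi / (M i j : ℝ) := by positivity
        linarith [Real.pi_pos]
      · exact div_le_div_of_nonneg_left Real.pi_pos.le (by norm_num) h2
    linarith

lemma km_neg_of_ne_two (i j : B) (h : i ≠ j) (h2 : M i j ≠ 2) : km M i j < 0 := by
  rw [km]
  split
  · norm_num
  · rename_i h0
    have h3 : (3:ℝ) ≤ (M i j : ℝ) := by
      have := M.off_diagonal i j h
      have : 3 ≤ M i j := by omega
      exact_mod_cast this
    have : 0 < Real.cos (Real.pi / (M i j : ℝ)) := by
      apply Real.cos_pos_of_mem_Ioo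
      constructor
      · have : 0 < Real.pi / (M i j : ℝ) := by positivity
        linarith [Real.pi_pos]
      · calc Real.pi / (M i j : ℝ) ≤ Real.pi / 3 :=
              div_le_div_of_nonneg_left Real.pi_pos.le (by norm_num) h3
          _ < Real.pi / 2 := by linarith [Real.pi_pos]
    linarith

variable [Fintype B] [DecidableEq B]

/-- the vector space -/
abbrev V (B : Type*) : Type _ := B → ℝ

noncomputable def ev (i : B) : V B := Pi.single i 1

@[simp] lemma ev_self (i : B) : ev i i = (1:ℝ) := by simp [ev]

lemma ev_apply (i l : B) : ev i l = if l = i then (1:ℝ) else 0 := by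
  simp [ev, Pi.single_apply]

/-- pairing with a basis vector -/
noncomputable def Bi (M : CoxeterMatrix B) (i : B) (v : V B) : ℝ := ∑ j, km M i j * v j

/-- bilinear form -/
noncomputable def Bf (M : CoxeterMatrix B) (v u : V B) : ℝ := ∑ i, v i * Bi M i u

lemma Bi_ev (i j : B) : Bi M i (ev j) = km M i j := by
  rw [Bi, Finset.sum_eq_single j]
  · simp [ev]
  · intro b _ hb
    simp [ev_apply, hb]
  · intro h; exact absurd (Finset.mem_univ j) h

lemma Bi_add (i : B) (v u : V B) : Bi M i (v + u) = Bi M i v + Bi M i u := by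
  simp [Bi, mul_add, Finset.sum_add_distrib]

lemma Bi_sub (i : B) (v u : V B) : Bi M i (v - u) = Bi M i v - Bi M i u := by
  simp [Bi, mul_sub, Finset.sum_sub_distrib]

lemma Bi_smul (i : B) (c : ℝ) (v : V B) : Bi M i (c • v) = c * Bi M i v := by
  simp [Bi, Finset.mul_sum]; congr 1; funext j; ring

lemma Bf_ev_left (i : B) (u : V B) : Bf M (ev i) u = Bi M i u := by
  rw [Bf, Finset.sum_eq_single i]
  · simp [ev]
  · intro b _ hb; simp [ev_apply, hb]
  · intro h; exact absurd (Finset.mem_univ i) h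

lemma Bf_symm (v u : V B) : Bf M v u = Bf M u v := by
  simp only [Bf, Bi, Finset.mul_sum]
  rw [Finset.sum_comm]
  congr 1; funext i; congr 1; funext j
  rw [km_symm]; ring

lemma Bf_ev_right (i : B) (v : V B) : Bf M v (ev i) = Bi M i v := by
  rw [Bf_symm, Bf_ev_left]

lemma Bi_eq_Bf (i : B) (v : V B) : Bi M i v = Bf M (ev i) v := (Bf_ev_left i v).symm

/-- the reflection operator -/
noncomputable def rho (M : CoxeterMatrix B) (i : B) : Module.End ℝ (V B) where
  toFun v := v - (2 * Bi M i v) • ev i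
  map_add' v u := by simp [Bi_add]; module
  map_smul' c v := by simp [Bi_smul]; module

lemma rho_apply (i : B) (v : V B) : rho M i v = v - (2 * Bi M i v) • ev i := rfl

lemma rho_ev_self (i : B) : rho M i (ev i) = -ev i := by
  rw [rho_apply, Bi_ev, km_diag]; module

lemma rho_ev (i j : B) : rho M i (ev j) = ev j - (2 * km M i j) • ev i := by
  rw [rho_apply, Bi_ev]

lemma rho_fix (i : B) (v : V B) (h : Bi M i v = 0) : rho M i v = v := by
  rw [rho_apply, h]; module

lemma Bi_rho (l i : B) (v : V B) :
    Bi M l (rho M i v) = Bi M l v - (2 * Bi M i v) * km M l i := by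
  rw [rho_apply, Bi_sub, Bi_smul, Bi_ev]

lemma rho_invol (i : B) (v : V B) : rho M i (rho M i v) = v := by
  rw [rho_apply (v := rho M i v), Bi_rho, km_diag]
  rw [rho_apply]
  module

lemma Bf_sub_left (v y u : V B) : Bf M (v - y) u = Bf M v u - Bf M y u := by
  simp [Bf, sub_mul, Finset.sum_sub_distrib]

lemma Bf_smul_left (c : ℝ) (v u : V B) : Bf M (c • v) u = c * Bf M v u := by
  simp [Bf, Finset.mul_sum]; congr 1; funext j; ring

lemma Bf_sub_right (v y u : V B) : Bf M u (v - y) = Bf M u v - Bf M u y := by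
  rw [Bf_symm, Bf_sub_left, Bf_symm u v, Bf_symm u y]

lemma Bf_smul_right (c : ℝ) (v u : V B) : Bf M u (c • v) = c * Bf M u v := by
  rw [Bf_symm, Bf_smul_left, Bf_symm]

lemma Bf_rho (i : B) (v u : V B) : Bf M (rho M i v) (rho M i u) = Bf M v u := by
  rw [rho_apply, rho_apply, Bf_sub_left, Bf_sub_right, Bf_sub_right,
    Bf_smul_left, Bf_smul_right, Bf_smul_right, Bf_smul_left]
  rw [Bf_ev_left, Bf_ev_right, Bf_ev_right, Bi_ev, km_diag]
  ring


section Dihedral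

variable (i j : B)

lemma km_eq_neg_cos (hm0 : M i j ≠ 0) :
    km M i j = -Real.cos (Real.pi / (M i j : ℝ)) := by rw [km, if_neg hm0]

/-- product of reflection operators along a word -/
noncomputable def opw (M : CoxeterMatrix B) (ω : List B) : Module.End ℝ (V B) :=
  (ω.map (rho M)).prod

lemma opw_nil : opw M ([] : List B) = 1 := rfl

lemma opw_cons (a : B) (ω : List B) : opw M (a :: ω) = rho M a * opw M ω := by
  simp [opw]

lemma opw_alt_succ (k : ℕ) :
    opw M (CoxeterSystem.alternatingWord i j (k+1))
      = rho M (if Even k then j else i) * opw M (CoxeterSystem.alternatingWord i j k) := by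
  rw [CoxeterSystem.alternatingWord_succ', opw_cons]

lemma dihedral_chain (hij : i ≠ j) (hm0 : M i j ≠ 0) (k : ℕ) :
    opw M (CoxeterSystem.alternatingWord i j k) (ev i)
        = ((if Even k then Real.sin ((k:ℝ) * (Real.pi / (M i j : ℝ)) + (Real.pi / (M i j : ℝ)))
              else Real.sin ((k:ℝ) * (Real.pi / (M i j : ℝ)))) / Real.sin (Real.pi / (M i j : ℝ)))
            • ev i
          + ((if Even k then Real.sin ((k:ℝ) * (Real.pi / (M i j : ℝ)))
              else Real.sin ((k:ℝ) * (Real.pi / (M i j : ℝ)) + (Real.pi / (M i j : ℝ))))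
              / Real.sin (Real.pi / (M i j : ℝ))) • ev j
    ∧ opw M (CoxeterSystem.alternatingWord i j k) (ev j)
        = ((if Even k then -Real.sin ((k:ℝ) * (Real.pi / (M i j : ℝ)))
              else -Real.sin ((k:ℝ) * (Real.pi / (M i j : ℝ)) - (Real.pi / (M i j : ℝ))))
              / Real.sin (Real.pi / (M i j : ℝ))) • ev i
          + ((if Even k then -Real.sin ((k:ℝ) * (Real.pi / (M i j : ℝ)) - (Real.pi / (M i j : ℝ)))
              else -Real.sin ((k:ℝ) * (Real.pi / (M i j : ℝ)))) / Real.sin (Real.pi / (M i j : ℝ)))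
            • ev j := by
  set θ : ℝ := Real.pi / (M i j : ℝ) with hθ
  set c : ℝ := Real.cos θ with hc
  set s : ℝ := Real.sin θ with hs
  have hm2 : (2:ℝ) ≤ (M i j : ℝ) := by exact_mod_cast two_le_M i j hij hm0
  have hθpos : 0 < θ := by rw [hθ]; positivity
  have hθle : θ < Real.pi := by
    rw [hθ, div_lt_iff₀ (by positivity)]
    nlinarith [Real.pi_pos]
  have hspos : 0 < s := Real.sin_pos_of_pos_of_lt_pi hθpos hθle
  have hsne : s ≠ 0 := ne_of_gt hspos
  have hid : ∀ y : ℝ, Real.sin (y + θ) = 2 * c * Real.sin y - Real.sin (y - θ) := by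
    intro y; rw [Real.sin_add, Real.sin_sub, hc]; ring
  have hkm : km M i j = -c := km_eq_neg_cos i j hm0
  have hkm' : km M j i = -c := by rw [km_symm]; exact hkm
  induction k with
  | zero =>
      constructor <;>
      · rw [show CoxeterSystem.alternatingWord i j 0 = ([]:List B) from rfl, opw_nil]
        simp only [Module.End.one_apply, Nat.cast_zero, zero_mul, if_pos Even.zero, zero_add,
          zero_sub, Real.sin_zero, Real.sin_neg, neg_zero, neg_neg, zero_div, zero_smul,
          add_zero, ← hs, div_self hsne, one_smul]
  | succ k ih =>
      obtain ⟨ih1, ih2⟩ := ih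
      rcases Nat.even_or_odd k with hk | hk
      · -- k even: prepend j
        have hk1 : ¬ Even (k+1) := by simp [Nat.even_add_one, hk]
        simp only [if_pos hk] at ih1 ih2
        rw [opw_alt_succ, if_pos hk]
        simp only [if_neg hk1]
        constructor
        · rw [Module.End.mul_apply, ih1, map_add, map_smul, map_smul, rho_ev_self,
            rho_ev, hkm']
          push_cast
          rw [show ((k:ℝ)+1) * θ = (k:ℝ)*θ + θ by ring]
          rw [show ((k:ℝ)*θ + θ) + θ = ((k:ℝ)*θ+θ) + θ by ring, hid ((k:ℝ)*θ+θ)]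
          rw [show (k:ℝ)*θ + θ - θ = (k:ℝ)*θ by ring]
          match_scalars <;> field_simp <;> ring
        · rw [Module.End.mul_apply, ih2, map_add, map_smul, map_smul, rho_ev_self,
            rho_ev, hkm']
          push_cast
          rw [show ((k:ℝ)+1) * θ - θ = (k:ℝ)*θ by ring]
          rw [show ((k:ℝ)+1) * θ = ((k:ℝ)*θ - θ) + θ + θ by ring, hid ((k:ℝ)*θ - θ + θ)]
          rw [show (k:ℝ)*θ - θ + θ = (k:ℝ)*θ by ring]
          match_scalars <;> field_simp <;> ring
      · -- k odd: prepend i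
        have hk' : ¬ Even k := Nat.not_even_iff_odd.mpr hk
        have hk1 : Even (k+1) := Nat.even_add_one.mpr hk'
        simp only [if_neg hk'] at ih1 ih2
        rw [opw_alt_succ, if_neg hk']
        simp only [if_pos hk1]
        constructor
        · rw [Module.End.mul_apply, ih1, map_add, map_smul, map_smul, rho_ev_self,
            rho_ev, hkm]
          push_cast
          rw [show ((k:ℝ)+1) * θ = (k:ℝ)*θ + θ by ring]
          rw [show ((k:ℝ)*θ + θ) + θ = ((k:ℝ)*θ+θ) + θ by ring, hid ((k:ℝ)*θ+θ)]
          rw [show (k:ℝ)*θ + θ - θ = (k:ℝ)*θ by ring]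
          match_scalars <;> field_simp <;> ring
        · rw [Module.End.mul_apply, ih2, map_add, map_smul, map_smul, rho_ev_self,
            rho_ev, hkm]
          push_cast
          rw [show ((k:ℝ)+1) * θ - θ = (k:ℝ)*θ by ring]
          rw [show ((k:ℝ)+1) * θ = ((k:ℝ)*θ - θ) + θ + θ by ring, hid ((k:ℝ)*θ - θ + θ)]
          rw [show (k:ℝ)*θ - θ + θ = (k:ℝ)*θ by ring]
          match_scalars <;> field_simp <;> ring


lemma opw_two_mul (k : ℕ) :
    opw M (CoxeterSystem.alternatingWord i j (2*k)) = (rho M i * rho M j)^k := by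
  induction k with
  | zero =>
      rw [show 2*0 = 0 by ring, show CoxeterSystem.alternatingWord i j 0 = ([]:List B) from rfl,
        opw_nil, pow_zero]
  | succ k ih =>
      have e1 : Even (2*k) := even_two_mul k
      have e2 : ¬ Even (2*k+1) := by simp [Nat.even_add_one, e1]
      rw [show 2*(k+1) = (2*k+1)+1 by ring, opw_alt_succ, if_neg e2, opw_alt_succ, if_pos e1,
        ih, pow_succ', mul_assoc]

lemma lift_cond : ∀ i j : B, (rho M i * rho M j) ^ M i j = 1 := by
  intro i j
  by_cases hij : i = j
  · subst hij
    rw [M.diagonal, pow_one]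
    exact LinearMap.ext fun v => by
      rw [Module.End.mul_apply, rho_invol, Module.End.one_apply]
  · by_cases hm0 : M i j = 0
    · rw [hm0, pow_zero]
    · set θ : ℝ := Real.pi / (M i j : ℝ) with hθ
      set c : ℝ := Real.cos θ with hc
      set s : ℝ := Real.sin θ with hs
      have hm2 : (2:ℝ) ≤ (M i j : ℝ) := by exact_mod_cast two_le_M i j hij hm0
      have hθpos : 0 < θ := by rw [hθ]; positivity
      have hθle : θ < Real.pi := by
        rw [hθ, div_lt_iff₀ (by positivity)]
        nlinarith [Real.pi_pos]
      have hspos : 0 < s := Real.sin_pos_of_pos_of_lt_pi hθpos hθle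
      have hsne : s ≠ 0 := ne_of_gt hspos
      have hs2 : s^2 + c^2 = 1 := Real.sin_sq_add_cos_sq θ
      have hker : (1:ℝ) - c^2 ≠ 0 := by nlinarith
      have hkm : km M i j = -c := km_eq_neg_cos i j hm0
      have hkm' : km M j i = -c := by rw [km_symm]; exact hkm
      have h2pi : ((2 * M i j : ℕ):ℝ) * θ = 2 * Real.pi := by
        have hMne : ((M i j : ℕ):ℝ) ≠ 0 := by positivity
        push_cast
        field_simp [hθ]
        rw [hθ]; field_simp
      -- values of the alternating product at 2 * M i j
      have heven : Even (2 * M i j) := ⟨M i j, by ring⟩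
      have hchain := dihedral_chain i j hij hm0 (2 * M i j)
      rw [if_pos heven, if_pos heven, if_pos heven, if_pos heven, h2pi] at hchain
      simp only [← hθ, ← hs] at hchain
      have hsin1 : Real.sin (2 * Real.pi + θ) = s := by
        rw [Real.sin_add, Real.sin_two_pi, Real.cos_two_pi]; simp [hs]
      have hsin2 : Real.sin (2 * Real.pi) = 0 := Real.sin_two_pi
      have hsin3 : Real.sin (2 * Real.pi - θ) = -s := by
        rw [Real.sin_sub, Real.sin_two_pi, Real.cos_two_pi]; simp [hs]
      simp only [hsin1, hsin2, hsin3] at hchain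
      simp only [div_self hsne, zero_div, neg_zero, neg_neg, zero_smul, one_smul,
        add_zero, zero_add] at hchain
      obtain ⟨hvi, hvj⟩ := hchain
      rw [opw_two_mul i j] at hvi hvj
      -- now extend to all of V
      apply LinearMap.ext
      intro v
      set a : ℝ := (Bi M i v + c * Bi M j v)/(1 - c^2) with ha
      set b : ℝ := (Bi M j v + c * Bi M i v)/(1 - c^2) with hb
      set q : V B := v - a • ev i - b • ev j with hq
      have hBiq : Bi M i q = 0 := by
        rw [hq, Bi_sub, Bi_sub, Bi_smul, Bi_smul, Bi_ev, Bi_ev, km_diag, hkm]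
        rw [ha, hb]
        field_simp
        ring
      have hBjq : Bi M j q = 0 := by
        rw [hq, Bi_sub, Bi_sub, Bi_smul, Bi_smul, Bi_ev, Bi_ev, km_diag, hkm']
        rw [ha, hb]
        field_simp
        ring
      have hfixq : ∀ n : ℕ, ((rho M i * rho M j)^n) q = q := by
        intro n
        induction n with
        | zero => rw [pow_zero, Module.End.one_apply]
        | succ n ih =>
            rw [pow_succ, Module.End.mul_apply, Module.End.mul_apply,
              rho_fix j q hBjq, rho_fix i q hBiq, ih]
      have hv : v = a • ev i + b • ev j + q := by rw [hq]; module
      rw [Module.End.one_apply, hv, map_add, map_add, map_smul, map_smul, hvi, hvj, hfixq]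

end Dihedral

/-- the geometric representation -/
noncomputable def sigma (cs : CoxeterSystem M W) : W →* Module.End ℝ (V B) :=
  cs.lift ⟨fun i => rho M i, lift_cond⟩

@[simp] lemma sigma_simple (cs : CoxeterSystem M W) (i : B) :
    sigma cs (cs.simple i) = rho M i :=
  cs.lift_apply_simple lift_cond i

lemma sigma_inv_apply (cs : CoxeterSystem M W) (w : W) (v : V B) :
    sigma cs w⁻¹ (sigma cs w v) = v := by
  rw [← Module.End.mul_apply, ← map_mul, inv_mul_cancel, map_one, Module.End.one_apply]

lemma sigma_apply_inv (cs : CoxeterSystem M W) (w : W) (v : V B) :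
    sigma cs w (sigma cs w⁻¹ v) = v := by
  rw [← Module.End.mul_apply, ← map_mul, mul_inv_cancel, map_one, Module.End.one_apply]

lemma sigma_wordProd (cs : CoxeterSystem M W) (ω : List B) :
    sigma cs (cs.wordProd ω) = opw M ω := by
  rw [CoxeterSystem.wordProd, map_list_prod, opw, List.map_map]
  rw [show (⇑(sigma cs) ∘ cs.simple) = rho M from funext fun l => by simp]

lemma Bf_sigma (cs : CoxeterSystem M W) (w : W) :
    ∀ v u : V B, Bf M (sigma cs w v) (sigma cs w u) = Bf M v u := by
  refine cs.simple_induction (p := fun w => ∀ v u : V B,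
      Bf M (sigma cs w v) (sigma cs w u) = Bf M v u) w ?_ ?_ ?_
  · intro i v u
    rw [sigma_simple]
    exact Bf_rho i v u
  · intro v u
    rw [map_one, Module.End.one_apply, Module.End.one_apply]
  · intro w₁ w₂ h₁ h₂ v u
    rw [map_mul, Module.End.mul_apply, Module.End.mul_apply, h₁, h₂]




lemma km_zero (i j : B) (h : M i j = 0) : km M i j = -1 := by rw [km, if_pos h]

/-- nonnegativity of coefficients of alternating words acting on a simple vector -/
lemma opw_alt_nonneg (i j : B) (hij : i ≠ j) (q : ℕ) (hq : M i j = 0 ∨ q + 1 ≤ M i j) :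
    ∃ a b : ℝ, 0 ≤ a ∧ 0 ≤ b ∧
      opw M (CoxeterSystem.alternatingWord i j q) (ev i) = a • ev i + b • ev j := by
  rcases hq with hm0 | hqle
  · -- infinite case: integer-style induction
    have hkm : km M i j = -1 := km_zero i j hm0
    have hkm' : km M j i = -1 := by rw [km_symm]; exact hkm
    suffices h : ∃ a b : ℝ, 0 ≤ a ∧ 0 ≤ b ∧ (if Even q then b ≤ a else a ≤ b) ∧
        opw M (CoxeterSystem.alternatingWord i j q) (ev i) = a • ev i + b • ev j by
      obtain ⟨a, b, h1, h2, _, h4⟩ := h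
      exact ⟨a, b, h1, h2, h4⟩
    induction q with
    | zero =>
        refine ⟨1, 0, by norm_num, le_refl 0, by simp, ?_⟩
        rw [show CoxeterSystem.alternatingWord i j 0 = ([]:List B) from rfl, opw_nil]
        simp only [Module.End.one_apply]
        module
    | succ q ih =>
        obtain ⟨a, b, h1, h2, h3, h4⟩ := ih
        rcases Nat.even_or_odd q with hk | hk
        · rw [if_pos hk] at h3
          have hk1 : ¬ Even (q+1) := by simp [Nat.even_add_one, hk]
          refine ⟨a, 2*a - b, h1, by linarith, by rw [if_neg hk1]; linarith, ?_⟩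
          rw [opw_alt_succ, if_pos hk, Module.End.mul_apply, h4, map_add, map_smul, map_smul,
            rho_ev_self, rho_ev, hkm']
          module
        · have hk' : ¬ Even q := Nat.not_even_iff_odd.mpr hk
          rw [if_neg hk'] at h3
          have hk1 : Even (q+1) := Nat.even_add_one.mpr hk'
          refine ⟨2*b - a, b, by linarith, h2, by rw [if_pos hk1]; linarith, ?_⟩
          rw [opw_alt_succ, if_neg hk', Module.End.mul_apply, h4, map_add, map_smul, map_smul,
            rho_ev_self, rho_ev, hkm]
          module
  · -- finite case, q + 1 ≤ m : use the sine formulas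
    have hm0 : M i j ≠ 0 := by omega
    set θ : ℝ := Real.pi / (M i j : ℝ) with hθ
    set se : ℝ := Real.sin θ with hs
    have hm2 : (2:ℝ) ≤ (M i j : ℝ) := by exact_mod_cast two_le_M i j hij hm0
    have hθpos : 0 < θ := by rw [hθ]; positivity
    have hθle : θ < Real.pi := by
      rw [hθ, div_lt_iff₀ (by positivity)]
      nlinarith [Real.pi_pos]
    have hspos : 0 < se := Real.sin_pos_of_pos_of_lt_pi hθpos hθle
    have hq1 : 0 ≤ (q:ℝ) * θ := by positivity
    have hq2 : (q:ℝ) * θ + θ ≤ Real.pi := by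
      have : ((q:ℝ) + 1) ≤ (M i j : ℝ) := by exact_mod_cast hqle
      have heq : ((M i j : ℝ)) * θ = Real.pi := by
        rw [hθ]; field_simp
      nlinarith [hθpos]
    have hs1 : 0 ≤ Real.sin ((q:ℝ) * θ) := by
      apply Real.sin_nonneg_of_nonneg_of_le_pi hq1
      nlinarith [hθpos]
    have hs2 : 0 ≤ Real.sin ((q:ℝ) * θ + θ) := by
      apply Real.sin_nonneg_of_nonneg_of_le_pi
      · nlinarith
      · exact hq2
    have hchain := (dihedral_chain i j hij hm0 q).1
    rw [← hθ, ← hs] at hchain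
    rcases Nat.even_or_odd q with hk | hk
    · rw [if_pos hk, if_pos hk] at hchain
      exact ⟨_, _, by positivity, by positivity, hchain⟩
    · have hk' : ¬ Even q := Nat.not_even_iff_odd.mpr hk
      rw [if_neg hk', if_neg hk'] at hchain
      exact ⟨_, _, by positivity, by positivity, hchain⟩

section KeyLemma

variable (cs : CoxeterSystem M W)

/-- The stripping lemma: peel a maximal alternating word off the right end. -/
lemma strip : ∀ n : ℕ, ∀ (w : W) (i j : B), i ≠ j → cs.length w ≤ n →
    cs.IsRightDescent w j →
    ∃ (u : W) (q : ℕ), 1 ≤ q ∧ w = u * cs.wordProd (CoxeterSystem.alternatingWord i j q) ∧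
      cs.length w = cs.length u + q ∧ ¬ cs.IsRightDescent u i ∧ ¬ cs.IsRightDescent u j := by
  intro n
  induction n with
  | zero =>
      intro w i j _ hlen hdes
      have : w = 1 := cs.length_eq_zero_iff.mp (Nat.le_zero.mp hlen)
      subst this
      exact absurd hdes (cs.not_isRightDescent_one j)
  | succ n ih =>
      intro w i j hij hlen hdes
      set w₁ := w * cs.simple j with hw₁
      have hw : w = w₁ * cs.simple j := by
        rw [hw₁, CoxeterSystem.simple_mul_simple_cancel_right]
      have hlen1 : cs.length w = cs.length w₁ + 1 := (cs.isRightDescent_iff.mp hdes).symm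
      have hlenw1 : cs.length w₁ ≤ n := by omega
      by_cases hd1 : cs.IsRightDescent w₁ i
      · -- recurse with swapped roles
        obtain ⟨u, q, hq1, hEq, hLen, hndj, hndi⟩ := ih w₁ j i (Ne.symm hij) hlenw1 hd1
        refine ⟨u, q + 1, by omega, ?_, by omega, hndi, hndj⟩
        rw [hw, hEq, CoxeterSystem.alternatingWord_succ, mul_assoc,
          ← CoxeterSystem.wordProd_concat]
      · -- done: q = 1
        have hndj : ¬ cs.IsRightDescent w₁ j := by
          intro hcon
          have := cs.isRightDescent_iff.mp hcon
          rw [← hw] at this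
          omega
        refine ⟨w₁, 1, le_refl 1, ?_, by omega, hd1, hndj⟩
        rw [show CoxeterSystem.alternatingWord i j 1 = [j] from rfl,
          CoxeterSystem.wordProd_singleton, ← hw]

/-- Key positivity lemma: if `i` is not a right descent of `w`, then `w` maps `e i` into the
nonnegative cone. -/
lemma key_pos : ∀ n : ℕ, ∀ (w : W) (i : B), cs.length w ≤ n → ¬ cs.IsRightDescent w i →
    ∀ l : B, 0 ≤ sigma cs w (ev i) l := by
  intro n
  induction n with
  | zero =>
      intro w i hlen _ l
      have : w = 1 := cs.length_eq_zero_iff.mp (Nat.le_zero.mp hlen)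
      subst this
      rw [map_one, Module.End.one_apply, ev_apply]
      split <;> norm_num
  | succ n ih =>
      intro w i hlen hnd l
      by_cases hw1 : w = 1
      · subst hw1
        rw [map_one, Module.End.one_apply, ev_apply]
        split <;> norm_num
      · obtain ⟨j, hdes⟩ := cs.exists_rightDescent_of_ne_one hw1
        have hij : i ≠ j := by
          intro h; subst h; exact hnd hdes
        obtain ⟨u, q, hq1, hEq, hLen, hndi, hndj⟩ := strip cs (n+1) w i j hij hlen hdes
        have hlenu : cs.length u ≤ n := by omega
        have hui := ih u i hlenu hndi
        have huj := ih u j hlenu hndj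
        -- the alternating word is reduced
        have hred : cs.length (cs.wordProd (CoxeterSystem.alternatingWord i j q)) = q := by
          have h1 : cs.length (cs.wordProd (CoxeterSystem.alternatingWord i j q)) ≤ q := by
            have := cs.length_wordProd_le (CoxeterSystem.alternatingWord i j q)
            rwa [CoxeterSystem.length_alternatingWord] at this
          have h2 : q ≤ cs.length (cs.wordProd (CoxeterSystem.alternatingWord i j q)) := by
            have := cs.length_mul_le u (cs.wordProd (CoxeterSystem.alternatingWord i j q))
            rw [← hEq] at this
            omega
          omega
        -- q is small enough
        have hqle : M i j = 0 ∨ q + 1 ≤ M i j := by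
          by_cases hm0 : M i j = 0
          · exact Or.inl hm0
          right
          have hqleM : q ≤ M i j := by
            by_contra hgt
            push_neg at hgt
            exact (cs.not_isReduced_alternatingWord i j hm0 hgt)
              (by rw [CoxeterSystem.IsReduced, CoxeterSystem.length_alternatingWord]; exact hred)
          rcases Nat.lt_or_ge q (M i j) with h | h
          · omega
          · -- q = M i j : contradiction with ¬ rd(w, i) via the braid relation
            exfalso
            have hqm : q = M i j := by omega
            have hbraid : cs.wordProd (CoxeterSystem.alternatingWord i j q)
                = cs.wordProd (CoxeterSystem.alternatingWord j i q) := by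
              subst hqm
              have := cs.wordProd_braidWord_eq i j
              unfold CoxeterSystem.braidWord at this
              rwa [M.symmetric j i] at this
            have hq0 : q - 1 + 1 = q := by omega
            have haltji : CoxeterSystem.alternatingWord j i q
                = (CoxeterSystem.alternatingWord i j (q-1)).concat i := by
              conv_lhs => rw [← hq0]
              rw [CoxeterSystem.alternatingWord_succ]
            have hwsi : w * cs.simple i = u * cs.wordProd (CoxeterSystem.alternatingWord i j (q-1)) := by
              rw [hEq, hbraid, haltji, CoxeterSystem.wordProd_concat, mul_assoc, mul_assoc,
                CoxeterSystem.simple_mul_simple_self, mul_one]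
            have : cs.length (w * cs.simple i) < cs.length w := by
              calc cs.length (w * cs.simple i)
                  ≤ cs.length u + cs.length (cs.wordProd (CoxeterSystem.alternatingWord i j (q-1))) := by
                    rw [hwsi]; exact cs.length_mul_le _ _
                _ ≤ cs.length u + (q-1) := by
                    have := cs.length_wordProd_le (CoxeterSystem.alternatingWord i j (q-1))
                    rw [CoxeterSystem.length_alternatingWord] at this
                    omega
                _ < cs.length w := by omega
            exact hnd this
        obtain ⟨a, b, ha, hb, hab⟩ := opw_alt_nonneg i j hij q hqle
        have : sigma cs w (ev i) = a • (sigma cs u (ev i)) + b • (sigma cs u (ev j)) := by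
          rw [hEq, map_mul, Module.End.mul_apply, sigma_wordProd, hab, map_add, map_smul, map_smul]
        rw [this]
        simp only [Pi.add_apply, Pi.smul_apply, smul_eq_mul]
        have := hui l
        have := huj l
        positivity

/-- If `i` is a right descent, `w` maps `e i` into the nonpositive cone. -/
lemma key_neg (w : W) (i : B) (hd : cs.IsRightDescent w i) :
    ∀ l : B, sigma cs w (ev i) l ≤ 0 := by
  intro l
  set w' := w * cs.simple i with hw'
  have hnd : ¬ cs.IsRightDescent w' i := by
    rw [cs.not_isRightDescent_iff, hw', CoxeterSystem.simple_mul_simple_cancel_right]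
    exact (cs.isRightDescent_iff.mp hd).symm
  have hval := key_pos cs (cs.length w') w' i (le_refl _) hnd l
  have : sigma cs w (ev i) = - sigma cs w' (ev i) := by
    have : w = w' * cs.simple i := by
      rw [hw', CoxeterSystem.simple_mul_simple_cancel_right]
    rw [this, map_mul, Module.End.mul_apply, sigma_simple, rho_ev_self, map_neg]
  rw [this]
  simp only [Pi.neg_apply]
  linarith

end KeyLemma


section Roots

variable (cs : CoxeterSystem M W)

/-- roots of the geometric representation -/
def IsRt (α : V B) : Prop := ∃ (w : W) (l : B), α = sigma cs w (ev l)

/-- coordinatewise nonnegative -/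
def PosV (α : V B) : Prop := ∀ l : B, 0 ≤ α l

/-- coordinatewise nonpositive -/
def NegV (α : V B) : Prop := ∀ l : B, α l ≤ 0

/-- the positive roots -/
def PhiP : Set (V B) := {α | IsRt cs α ∧ PosV α}

lemma isRt_ev (l : B) : IsRt cs (ev l) := ⟨1, l, by rw [map_one, Module.End.one_apply]⟩

lemma isRt_sigma (w : W) {α : V B} (h : IsRt cs α) : IsRt cs (sigma cs w α) := by
  obtain ⟨u, l, rfl⟩ := h
  exact ⟨w * u, l, by rw [map_mul, Module.End.mul_apply]⟩

lemma Bf_root_self {α : V B} (h : IsRt cs α) : Bf M α α = 1 := by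
  obtain ⟨u, l, rfl⟩ := h
  rw [Bf_sigma, Bf_ev_left, Bi_ev, km_diag]

lemma root_ne_zero {α : V B} (h : IsRt cs α) : α ≠ 0 := by
  intro h0
  have := Bf_root_self cs h
  rw [h0] at this
  simp [Bf, Bi] at this

lemma root_dichotomy {α : V B} (h : IsRt cs α) : PosV α ∨ NegV α := by
  obtain ⟨w, l, rfl⟩ := h
  by_cases hd : cs.IsRightDescent w l
  · exact Or.inr (key_neg cs w l hd)
  · exact Or.inl (key_pos cs (cs.length w) w l (le_refl _) hd)

lemma root_eq_ev {α : V B} (h : IsRt cs α) (hpos : PosV α) (i : B)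
    (hsupp : ∀ l : B, l ≠ i → α l = 0) : α = ev i := by
  have hα : α = α i • ev i := by
    funext l
    by_cases hl : l = i
    · subst hl; simp [ev_apply]
    · rw [hsupp l hl]; simp [ev_apply, hl]
  have h1 : Bf M α α = 1 := Bf_root_self cs h
  rw [hα, Bf_smul_left, Bf_smul_right, Bf_ev_left, Bi_ev, km_diag, mul_one] at h1
  have : α i = 1 := by
    have := hpos i
    nlinarith
  rw [hα, this, one_smul]

lemma rho_perm (i : B) {α : V B} (hα : IsRt cs α) (hpos : PosV α) (hne : α ≠ ev i) :
    PosV (rho M i α) := by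
  have hroot : IsRt cs (rho M i α) := by
    have := isRt_sigma cs (cs.simple i) hα
    rwa [sigma_simple] at this
  rcases root_dichotomy cs hroot with h | h
  · exact h
  · exfalso
    apply hne
    apply root_eq_ev cs hα hpos i
    intro l hl
    have h1 : (rho M i α) l = α l := by
      rw [rho_apply]
      simp [ev_apply, hl]
    have := h l
    have := hpos l
    rw [h1] at *
    linarith

/-- inversion set -/
def InvS (w : W) : Set (V B) := {α | IsRt cs α ∧ PosV α ∧ NegV (sigma cs w α)}

lemma invS_subset_phiP (w : W) : InvS cs w ⊆ PhiP cs := fun α hα => ⟨hα.1, hα.2.1⟩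

lemma not_pos_and_neg {α : V B} (h : IsRt cs α) (h1 : PosV α) (h2 : NegV α) : False := by
  apply root_ne_zero cs h
  funext l
  exact le_antisymm (h2 l) (h1 l)

lemma invS_one : InvS cs 1 = ∅ := by
  ext α
  simp only [InvS, Set.mem_setOf_eq, Set.mem_empty_iff_false, iff_false, not_and]
  intro h h1 h2
  rw [map_one, Module.End.one_apply] at h2
  exact not_pos_and_neg cs h h1 h2

lemma ev_not_mem_invS {w : W} {i : B} (hnd : ¬ cs.IsRightDescent w i) :
    ev i ∉ InvS cs w := by
  rintro ⟨h, h1, h2⟩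
  exact not_pos_and_neg cs (isRt_sigma cs w (isRt_ev cs i))
    (key_pos cs (cs.length w) w i (le_refl _) hnd) h2

lemma invS_step {w : W} {i : B} (hnd : ¬ cs.IsRightDescent w i) :
    InvS cs (w * cs.simple i) = insert (ev i) (rho M i '' InvS cs w) := by
  have hkey : ∀ α : V B, sigma cs (w * cs.simple i) α = sigma cs w (rho M i α) := by
    intro α
    rw [map_mul, Module.End.mul_apply, sigma_simple]
  ext α
  constructor
  · rintro ⟨hroot, hpos, hneg⟩
    by_cases hne : α = ev i
    · exact Or.inl hne
    · right
      refine ⟨rho M i α, ⟨?_, ?_, ?_⟩, rho_invol i α⟩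
      · have := isRt_sigma cs (cs.simple i) hroot
        rwa [sigma_simple] at this
      · exact rho_perm cs i hroot hpos hne
      · rw [← hkey α]
        exact hneg
  · intro hα
    rcases hα with rfl | ⟨β, ⟨hroot, hpos, hneg⟩, rfl⟩
    · refine ⟨isRt_ev cs i, fun l => by rw [ev_apply]; split <;> norm_num, ?_⟩
      rw [hkey, rho_ev_self, map_neg]
      intro l
      simp only [Pi.neg_apply]
      have := key_pos cs (cs.length w) w i (le_refl _) hnd l
      linarith
    · have hβne : β ≠ ev i := by
        rintro rfl
        exact not_pos_and_neg cs (isRt_sigma cs w (isRt_ev cs i))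
          (key_pos cs (cs.length w) w i (le_refl _) hnd) hneg
      refine ⟨?_, rho_perm cs i hroot hpos hβne, ?_⟩
      · have := isRt_sigma cs (cs.simple i) hroot
        rwa [sigma_simple] at this
      · rw [hkey, rho_invol]
        exact hneg

lemma ev_not_mem_image {w : W} {i : B} :
    ev i ∉ rho M i '' InvS cs w := by
  rintro ⟨β, ⟨_, hpos, _⟩, hβ⟩
  have hβ2 : β = rho M i (ev i) := by rw [← hβ, rho_invol]
  rw [rho_ev_self] at hβ2
  have h3 := hpos i
  rw [hβ2] at h3
  simp at h3
  linarith

lemma invS_count : ∀ n : ℕ, ∀ w : W, cs.length w ≤ n →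
    (InvS cs w).Finite ∧ (InvS cs w).ncard = cs.length w := by
  intro n
  induction n with
  | zero =>
      intro w hlen
      have : w = 1 := cs.length_eq_zero_iff.mp (Nat.le_zero.mp hlen)
      subst this
      rw [invS_one]
      simp
  | succ n ih =>
      intro w hlen
      by_cases hw1 : w = 1
      · subst hw1; rw [invS_one]; simp
      · obtain ⟨j, hdes⟩ := cs.exists_rightDescent_of_ne_one hw1
        set w' := w * cs.simple j with hw'
        have hnd : ¬ cs.IsRightDescent w' j := by
          rw [cs.not_isRightDescent_iff, hw', CoxeterSystem.simple_mul_simple_cancel_right]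
          exact (cs.isRightDescent_iff.mp hdes).symm
        have hlen1 : cs.length w = cs.length w' + 1 := (cs.isRightDescent_iff.mp hdes).symm
        obtain ⟨hfin, hcard⟩ := ih w' (by omega)
        have hstep : InvS cs w = insert (ev j) (rho M j '' InvS cs w') := by
          rw [← invS_step cs hnd, hw', CoxeterSystem.simple_mul_simple_cancel_right]
        have hinj : Set.InjOn (rho M j) (InvS cs w') := fun x _ y _ hxy => by
          have : rho M j (rho M j x) = rho M j (rho M j y) := by rw [hxy]
          rwa [rho_invol, rho_invol] at this
        have hfin2 : (rho M j '' InvS cs w').Finite := hfin.image _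
        constructor
        · rw [hstep]; exact hfin2.insert _
        · rw [hstep, Set.ncard_insert_of_notMem (ev_not_mem_image cs) hfin2,
            Set.ncard_image_of_injOn hinj, hcard]
          omega

lemma length_le_of_phiP_finite (h : (PhiP cs).Finite) (w : W) :
    cs.length w ≤ (PhiP cs).ncard := by
  obtain ⟨_, hcard⟩ := invS_count cs (cs.length w) w (le_refl _)
  rw [← hcard]
  exact Set.ncard_le_ncard (invS_subset_phiP cs w) h

lemma not_infinite_of_phiP_finite (h : (PhiP cs).Finite) : ¬ Infinite W := by
  intro hinf
  set N := (PhiP cs).ncard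
  have hg : ∀ w : W, ∃ ω : List B, ω.length = cs.length w ∧ w = cs.wordProd ω :=
    fun w => by
      obtain ⟨ω, h1, h2⟩ := cs.exists_reduced_word w
      exact ⟨ω, by rw [h2]; exact h1.symm, h2⟩
  choose g hg1 hg2 using hg
  have hginj : Function.Injective g := by
    intro w1 w2 h12
    rw [hg2 w1, hg2 w2, h12]
  have hrange : Set.range g ⊆ {l : List B | l.length ≤ N} := by
    rintro _ ⟨w, rfl⟩
    rw [Set.mem_setOf_eq, hg1]
    exact length_le_of_phiP_finite cs h w
  have hfr : (Set.range g).Finite := Set.Finite.subset (List.finite_length_le B N) hrange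
  have : Finite (Set.range g) := hfr.to_subtype
  have : Finite W := Finite.of_injective_finite_range hginj
  exact not_finite W

end Roots


section Deodhar

variable (cs : CoxeterSystem M W)

lemma ev_decomp (v : V B) : v = ∑ l : B, v l • ev l := by
  funext b
  rw [Finset.sum_apply]
  rw [Finset.sum_eq_single b]
  · simp [ev_apply]
  · intro x _ hx
    simp [ev_apply, Ne.symm hx]
  · intro h; exact absurd (Finset.mem_univ b) h

lemma reflection_formula (u : W) (a : B) (x : V B) :
    sigma cs (u * cs.simple a * u⁻¹) x
      = x - (2 * Bf M (sigma cs u (ev a)) x) • sigma cs u (ev a) := by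
  rw [map_mul, map_mul, Module.End.mul_apply, Module.End.mul_apply, sigma_simple, rho_apply,
    map_sub, map_smul, sigma_apply_inv]
  have h2 : Bf M (sigma cs u (ev a)) x = Bi M a (sigma cs u⁻¹ x) := by
    conv_lhs => rw [← sigma_apply_inv cs u x]
    rw [Bf_sigma, ← Bi_eq_Bf]
  rw [h2]

lemma crossing_edge {G : SimpleGraph B} (hconn : G.Connected) (D : Finset B)
    (hne : D.Nonempty) (hne2 : D ≠ Finset.univ) :
    ∃ d p, d ∈ D ∧ p ∉ D ∧ G.Adj d p := by
  obtain ⟨d₀, hd₀⟩ := hne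
  have : ∃ p₀, p₀ ∉ D := by
    by_contra hcon
    push_neg at hcon
    exact hne2 (Finset.eq_univ_iff_forall.mpr hcon)
  obtain ⟨p₀, hp₀⟩ := this
  obtain ⟨walk⟩ := hconn d₀ p₀
  clear hne2
  induction walk with
  | nil => exact absurd hd₀ hp₀
  | @cons a x b hadj tail ih =>
      by_cases hx : x ∈ D
      · exact ih hx hp₀
      · exact ⟨a, x, hd₀, hx, hadj⟩

lemma deodhar (hirr : (SimpleGraph.fromRel (fun i j => M i j ≠ 2)).Connected) :
    ∀ k : ℕ, ∀ D : Finset B, D.card ≤ k → D ≠ Finset.univ →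
    ({β : V B | β ∈ PhiP cs ∧ ∃ l, l ∉ D ∧ β l ≠ 0}).Finite → (PhiP cs).Finite := by
  intro k
  induction k with
  | zero =>
      intro D hcard hne hF
      have hD : D = ∅ := Finset.card_eq_zero.mp (Nat.le_zero.mp hcard)
      subst hD
      apply hF.subset
      intro β hβ
      refine ⟨hβ, ?_⟩
      have := root_ne_zero cs hβ.1
      obtain ⟨l, hl⟩ := Function.ne_iff.mp this
      exact ⟨l, Finset.notMem_empty l, hl⟩
  | succ k ih =>
      intro D hcard hne hF
      classical
      by_cases hD0 : D = ∅
      · subst hD0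
        apply hF.subset
        intro β hβ
        refine ⟨hβ, ?_⟩
        have := root_ne_zero cs hβ.1
        obtain ⟨l, hl⟩ := Function.ne_iff.mp this
        exact ⟨l, Finset.notMem_empty l, hl⟩
      · obtain ⟨d, p, hd, hp, hadj⟩ :=
          crossing_edge hirr D (Finset.nonempty_of_ne_empty hD0) hne
        rw [SimpleGraph.fromRel_adj] at hadj
        obtain ⟨hdp, hMdp⟩ := hadj
        have hMdp' : M d p ≠ 2 := by
          rcases hMdp with h | h
          · exact h
          · rw [M.symmetric d p]; exact h
        set D' := D.filter (fun x => ∀ p', p' ∉ D → M x p' = 2) with hD'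
        have hdD' : d ∉ D' := by
          rw [hD', Finset.mem_filter]
          push_neg
          intro _
          exact ⟨p, hp, hMdp'⟩
        have hD'sub : D' ⊆ D := Finset.filter_subset _ _
        have hcard' : D'.card ≤ k := by
          have h1 : D'.card < D.card := Finset.card_lt_card ⟨hD'sub, fun hsub => hdD' (hsub hd)⟩
          omega
        have hne' : D' ≠ Finset.univ := by
          intro hcon
          rw [hcon] at hD'sub
          exact hne (Finset.univ_subset_iff.mp hD'sub)
        apply ih D' hcard' hne'
        set X := {β : V B | (β ∈ PhiP cs ∧ (∀ l, l ∉ D → β l = 0))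
            ∧ ∃ l, l ∈ D ∧ l ∉ D' ∧ β l ≠ 0} with hX
        have hXfin : X.Finite := by
          have hexX : ∀ β ∈ X, ∃ p', p' ∉ D ∧ Bf M β (ev p') < 0 := by
            rintro β ⟨⟨⟨hroot, hpos⟩, hout⟩, l, hlD, hlD', hlne⟩
            have hnot : ¬ (∀ p', p' ∉ D → M l p' = 2) := by
              intro hcon
              exact hlD' (by rw [hD']; exact Finset.mem_filter.mpr ⟨hlD, hcon⟩)
            push_neg at hnot
            obtain ⟨p', hp'D, hp'ne⟩ := hnot
            refine ⟨p', hp'D, ?_⟩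
            rw [Bf_ev_right]
            have hterm : ∀ j, j ≠ l → km M p' j * β j ≤ 0 := by
              intro j hj
              by_cases hjD : j ∈ D
              · have hjp : j ≠ p' := by rintro rfl; exact hp'D hjD
                have h1 : km M p' j ≤ 0 := by rw [km_symm]; exact km_nonpos j p' hjp
                have h2 : 0 ≤ β j := hpos j
                nlinarith
              · rw [hout j hjD, mul_zero]
            have hlterm : km M p' l * β l < 0 := by
              have hlp : l ≠ p' := by rintro rfl; exact hp'D hlD
              have h1 : km M p' l < 0 := by
                rw [km_symm]; exact km_neg_of_ne_two l p' hlp hp'ne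
              have h2 : 0 < β l := lt_of_le_of_ne (hpos l) (Ne.symm hlne)
              nlinarith
            rw [Bi, ← Finset.add_sum_erase _ _ (Finset.mem_univ l)]
            have hrest : ∑ j ∈ Finset.univ.erase l, km M p' j * β j ≤ 0 :=
              Finset.sum_nonpos (fun j hj => hterm j (Finset.ne_of_mem_erase hj))
            linarith
          have hex : ∀ β : V B, ∃ p', β ∈ X → (p' ∉ D ∧ Bf M β (ev p') < 0) := by
            intro β
            by_cases hβ : β ∈ X
            · obtain ⟨p', h⟩ := hexX β hβ
              exact ⟨p', fun _ => h⟩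
            · exact ⟨d, fun h => absurd h hβ⟩
          choose pf hpf using hex
          set Fm : V B → V B × B :=
            fun β => (ev (pf β) - (2 * Bf M β (ev (pf β))) • β, pf β) with hFm
          have himg : Fm '' X ⊆
              {β : V B | β ∈ PhiP cs ∧ ∃ l, l ∉ D ∧ β l ≠ 0} ×ˢ (Set.univ : Set B) := by
            rintro _ ⟨β, hβ, rfl⟩
            have hroot := hβ.1.1.1
            have hpos := hβ.1.1.2
            have hout := hβ.1.2
            refine ⟨?_, trivial⟩
            have hzroot : IsRt cs (ev (pf β) - (2 * Bf M β (ev (pf β))) • β) := by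
              obtain ⟨u, a, hroot'⟩ := hroot
              refine ⟨u * cs.simple a * u⁻¹, pf β, ?_⟩
              rw [reflection_formula cs u a (ev (pf β)), ← hroot']
            have hcoordp : (ev (pf β) - (2 * Bf M β (ev (pf β))) • β) (pf β) = 1 := by
              have hbp : β (pf β) = 0 := hout _ ((hpf β hβ).1)
              simp [ev_apply, hbp]
            have hzpos : PosV (ev (pf β) - (2 * Bf M β (ev (pf β))) • β) := by
              rcases root_dichotomy cs hzroot with h | h
              · exact h
              · exfalso
                have := h (pf β)
                rw [hcoordp] at this
                linarith
            exact ⟨⟨hzroot, hzpos⟩, pf β, (hpf β hβ).1, ne_of_eq_of_ne hcoordp one_ne_zero⟩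
          have hinj : Set.InjOn Fm X := by
            intro β hβ γ hγ heq
            have hps : pf β = pf γ := congrArg Prod.snd heq
            have h1 := congrArg Prod.fst heq
            simp only [hFm] at h1
            rw [← hps] at h1
            have h2 : (2 * Bf M β (ev (pf β))) • β = (2 * Bf M γ (ev (pf β))) • γ :=
              sub_right_inj.mp h1
            have hrootβ := hβ.1.1.1
            have hrootγ := hγ.1.1.1
            have hcβ : 2 * Bf M β (ev (pf β)) < 0 := by
              have := (hpf β hβ).2
              linarith
            have hcγ : 2 * Bf M γ (ev (pf β)) < 0 := by
              have := (hpf γ hγ).2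
              rw [hps]
              linarith
            have hnorm : Bf M ((2 * Bf M β (ev (pf β))) • β) ((2 * Bf M β (ev (pf β))) • β)
                = Bf M ((2 * Bf M γ (ev (pf β))) • γ) ((2 * Bf M γ (ev (pf β))) • γ) := by
              rw [h2]
            rw [Bf_smul_left, Bf_smul_right, Bf_smul_left, Bf_smul_right,
              Bf_root_self cs hrootβ, Bf_root_self cs hrootγ] at hnorm
            have hceq : 2 * Bf M β (ev (pf β)) = 2 * Bf M γ (ev (pf β)) := by nlinarith
            funext lc
            have h3 := congrFun h2 lc
            simp only [Pi.smul_apply, smul_eq_mul] at h3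
            rw [hceq] at h3
            exact mul_left_cancel₀ (by linarith) h3
          exact Set.Finite.of_finite_image ((hF.prod Set.finite_univ).subset himg) hinj
        apply Set.Finite.subset (hF.union hXfin)
        rintro β ⟨hβPhi, l, hlD', hlne⟩
        by_cases hcase : ∃ l', l' ∉ D ∧ β l' ≠ 0
        · left; exact ⟨hβPhi, hcase⟩
        · right
          push_neg at hcase
          have hlD : l ∈ D := by
            by_contra hlnotD
            exact hlne (hcase l hlnotD)
          exact ⟨⟨hβPhi, hcase⟩, l, hlD, hlD', hlne⟩

end Deodhar


section FundDom

variable (cs : CoxeterSystem M W)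

lemma f_nonneg_of_pos (f : V B →ₗ[ℝ] ℝ) (hf : ∀ i, 0 ≤ f (ev i)) (v : V B) (hv : PosV v) :
    0 ≤ f v := by
  have : f v = ∑ l : B, v l * f (ev l) := by
    conv_lhs => rw [ev_decomp v]
    rw [map_sum]
    congr 1
    funext l
    rw [map_smul, smul_eq_mul]
  rw [this]
  exact Finset.sum_nonneg fun l _ => mul_nonneg (hv l) (hf l)

lemma fund_dom : ∀ n : ℕ, ∀ (w : W) (f : V B →ₗ[ℝ] ℝ), cs.length w ≤ n →
    (∀ i, 0 ≤ f (ev i)) → (∀ i, 0 ≤ f (sigma cs w⁻¹ (ev i))) →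
    ∀ v : V B, f (sigma cs w⁻¹ v) = f v := by
  intro n
  induction n with
  | zero =>
      intro w f hlen _ _ v
      have : w = 1 := cs.length_eq_zero_iff.mp (Nat.le_zero.mp hlen)
      subst this
      rw [inv_one, map_one, Module.End.one_apply]
  | succ n ih =>
      intro w f hlen hC hC2 v
      by_cases hw1 : w = 1
      · subst hw1
        rw [inv_one, map_one, Module.End.one_apply]
      · obtain ⟨i, hd⟩ := cs.exists_rightDescent_of_ne_one hw1
        have hneg := key_neg cs w i hd
        have hposneg : PosV (-(sigma cs w (ev i))) := by
          intro l
          simp only [Pi.neg_apply]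
          linarith [hneg l]
        have hfei : f (ev i) = 0 := by
          have h1 : 0 ≤ f (sigma cs w⁻¹ (-(sigma cs w (ev i)))) := by
            have := f_nonneg_of_pos ((f.comp (sigma cs w⁻¹ : Module.End ℝ (V B)))) hC2
              (-(sigma cs w (ev i))) hposneg
            exact this
          rw [map_neg, map_neg, sigma_inv_apply] at h1
          have h3 : 0 ≤ f (ev i) := hC i
          linarith
        have hfix : ∀ x, f (rho M i x) = f x := by
          intro x
          rw [rho_apply, map_sub, map_smul, smul_eq_mul, hfei, mul_zero, sub_zero]
        set w' := w * cs.simple i with hw'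
        have hlen' : cs.length w' ≤ n := by
          have := cs.isRightDescent_iff.mp hd
          rw [← hw'] at this
          omega
        have hkey : ∀ x : V B, sigma cs w'⁻¹ x = rho M i (sigma cs w⁻¹ x) := by
          intro x
          rw [hw', mul_inv_rev, cs.inv_simple, map_mul, Module.End.mul_apply, sigma_simple]
        have hC2' : ∀ u, 0 ≤ f (sigma cs w'⁻¹ (ev u)) := by
          intro u
          rw [hkey, hfix]
          exact hC2 u
        have := ih w' f hlen' hC hC2' v
        rw [hkey, hfix] at this
        exact this

lemma parabolic_fixes (J : Set B) (t : B) (ht : ∀ j ∈ J, j ≠ t) :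
    ∀ u ∈ Subgroup.closure (cs.simple '' J), ∀ x : V B, (sigma cs u x) t = x t := by
  intro u hu
  induction hu using Subgroup.closure_induction with
  | mem y hy =>
      obtain ⟨j, hj, rfl⟩ := hy
      intro x
      rw [sigma_simple, rho_apply]
      simp [ev_apply, Ne.symm (ht j hj)]
  | one => intro x; rw [map_one, Module.End.one_apply]
  | mul a b _ _ pa pb =>
      intro x
      rw [map_mul, Module.End.mul_apply, pa, pb]
  | inv a _ pa =>
      intro x
      have := pa (sigma cs a⁻¹ x)
      rw [sigma_apply_inv] at this
      exact this.symm

end FundDom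

section Main

variable (cs : CoxeterSystem M W)

theorem main_conj (hirr : (SimpleGraph.fromRel (fun i j => M i j ≠ 2)).Connected)
    (hinf : Infinite W) (I J : Finset B)
    (hI : I.card = Fintype.card B - 1) (hJ : J.card = Fintype.card B - 1)
    (w : W)
    (hw : (Subgroup.closure (cs.simple '' (↑J : Set B))).map (MulAut.conj w).toMonoidHom
      = Subgroup.closure (cs.simple '' (↑I : Set B))) : I = J := by
  classical
  by_contra hne
  -- B is nonempty
  have hBne : Nonempty B := by
    by_contra h
    have hE : IsEmpty B := not_nonempty_iff.mp h
    have hsub : ∀ x : W, x = 1 := by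
      intro x
      obtain ⟨ω, hω⟩ := cs.wordProd_surjective x
      cases ω with
      | nil => rw [← hω, CoxeterSystem.wordProd_nil]
      | cons a _ => exact hE.elim a
    obtain ⟨x, y, hxy⟩ := (inferInstance : Nontrivial W)
    exact hxy ((hsub x).trans (hsub y).symm)
  have hn1 : 1 ≤ Fintype.card B := Fintype.card_pos
  have hIcard : Iᶜ.card = 1 := by
    rw [Finset.card_compl, hI]
    have : I.card ≤ Fintype.card B := Finset.card_le_univ I
    omega
  have hJcard : Jᶜ.card = 1 := by
    rw [Finset.card_compl, hJ]
    have : J.card ≤ Fintype.card B := Finset.card_le_univ J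
    omega
  obtain ⟨s0, hs0⟩ := Finset.card_eq_one.mp hIcard
  obtain ⟨t0, ht0⟩ := Finset.card_eq_one.mp hJcard
  have hs0I : s0 ∉ I := by
    have : s0 ∈ Iᶜ := by rw [hs0]; exact Finset.mem_singleton_self s0
    rwa [Finset.mem_compl] at this
  have ht0J : t0 ∉ J := by
    have : t0 ∈ Jᶜ := by rw [ht0]; exact Finset.mem_singleton_self t0
    rwa [Finset.mem_compl] at this
  have hIs0 : ∀ l : B, l ∉ I → l = s0 := by
    intro l hl
    have : l ∈ Iᶜ := Finset.mem_compl.mpr hl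
    rw [hs0, Finset.mem_singleton] at this
    exact this
  have hst : s0 ≠ t0 := by
    intro h
    apply hne
    have hcc : Iᶜ = Jᶜ := by rw [hs0, ht0, h]
    have h2 : Iᶜᶜ = Jᶜᶜ := by rw [hcc]
    rwa [compl_compl, compl_compl] at h2
  have ht0I : t0 ∈ I := by
    by_contra h
    exact hst (hIs0 t0 h).symm
  -- the coordinate functional at t0
  set xJ : V B →ₗ[ℝ] ℝ := LinearMap.proj t0 with hxJ
  have hxJev : ∀ l : B, xJ (ev l) = if t0 = l then 1 else 0 := by
    intro l
    rw [hxJ]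
    simp only [LinearMap.proj_apply]
    rw [ev_apply]
  have hxJfix : ∀ u ∈ Subgroup.closure (cs.simple '' (↑J : Set B)), ∀ x : V B,
      (sigma cs u x) t0 = x t0 :=
    parabolic_fixes cs (↑J) t0 (fun j hj => by
      rintro rfl
      exact ht0J hj)
  -- the fixed functional
  have hvI : ∀ i ∈ I, (sigma cs w⁻¹ (ev i)) t0 = 0 := by
    intro i hi
    have hsi : cs.simple i ∈ Subgroup.closure (cs.simple '' (↑I : Set B)) :=
      Subgroup.subset_closure ⟨i, by exact_mod_cast hi, rfl⟩
    rw [← hw] at hsi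
    obtain ⟨u, hu, hui⟩ := hsi
    have hui' : cs.simple i = w * u * w⁻¹ := by
      rw [← hui]; rfl
    have hcomm : ∀ x : V B, (sigma cs w⁻¹ (sigma cs (cs.simple i) x)) t0
        = (sigma cs w⁻¹ x) t0 := by
      intro x
      have : w⁻¹ * cs.simple i = u * w⁻¹ := by
        rw [hui']; group
      rw [← Module.End.mul_apply, ← map_mul, this, map_mul, Module.End.mul_apply]
      exact hxJfix u hu _
    have := hcomm (ev i)
    rw [sigma_simple, rho_ev_self, map_neg] at this
    simp only [Pi.neg_apply] at this
    linarith
  by_cases hcase : 0 ≤ (sigma cs w⁻¹ (ev s0)) t0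
  · -- fundamental domain case
    have hC : ∀ l, 0 ≤ xJ (ev l) := by
      intro l
      rw [hxJev]
      split <;> norm_num
    have hC2 : ∀ l, 0 ≤ xJ (sigma cs w⁻¹ (ev l)) := by
      intro l
      by_cases hl : l ∈ I
      · rw [hxJ]
        have := hvI l hl
        simp only [LinearMap.proj_apply] at *
        rw [this]
      · rw [hIs0 l hl, hxJ]
        exact hcase
    have hfd := fund_dom cs (cs.length w) w xJ (le_refl _) hC hC2 (ev t0)
    have h1 : xJ (ev t0) = 1 := by rw [hxJev, if_pos rfl]
    have h2 : xJ (sigma cs w⁻¹ (ev t0)) = 0 := by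
      rw [hxJ]
      exact hvI t0 ht0I
    rw [hfd, h1] at h2
    norm_num at h2
  · push_neg at hcase
    -- positive roots with support at s0 are inversions of w⁻¹
    have hsubset : {β : V B | β ∈ PhiP cs ∧ ∃ l, l ∉ I ∧ β l ≠ 0} ⊆ InvS cs w⁻¹ := by
      rintro β ⟨⟨hroot, hpos⟩, l, hlI, hlne⟩
      have hls0 : l = s0 := hIs0 l hlI
      rw [hls0] at hlne
      refine ⟨hroot, hpos, ?_⟩
      by_contra hneg
      have hrootw : IsRt cs (sigma cs w⁻¹ β) := isRt_sigma cs w⁻¹ hroot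
      have hposw : PosV (sigma cs w⁻¹ β) := by
        rcases root_dichotomy cs hrootw with h | h
        · exact h
        · exact absurd h hneg
      have h1 : 0 ≤ (sigma cs w⁻¹ β) t0 := hposw t0
      have h2 : (sigma cs w⁻¹ β) t0 = β s0 * (sigma cs w⁻¹ (ev s0)) t0 := by
        conv_lhs => rw [ev_decomp β]
        rw [map_sum]
        rw [Finset.sum_apply]
        rw [Finset.sum_eq_single s0]
        · rw [map_smul]
          simp
        · intro b _ hb
          rw [map_smul]
          simp only [Pi.smul_apply, smul_eq_mul]
          by_cases hbI : b ∈ I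
          · rw [hvI b hbI, mul_zero]
          · exact absurd (hIs0 b hbI) hb
        · intro h; exact absurd (Finset.mem_univ s0) h
      have hβs0 : 0 < β s0 := lt_of_le_of_ne (hpos s0) (Ne.symm hlne)
      nlinarith
    have hfinInv : (InvS cs w⁻¹).Finite := (invS_count cs (cs.length w⁻¹) w⁻¹ (le_refl _)).1
    have hIne : I ≠ Finset.univ := by
      intro h
      rw [h] at hs0I
      exact hs0I (Finset.mem_univ s0)
    have hPhiFin : (PhiP cs).Finite :=
      deodhar cs hirr I.card I (le_refl _) hIne (hfinInv.subset hsubset)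
    exact not_infinite_of_phiP_finite cs hPhiFin hinf

end Main

end CoxProof



open List

namespace CoxPaper

/-- Irreducibility of a Coxeter matrix: connectedness of the Coxeter diagram, the graph
on `B` with an edge between distinct `i`, `j` whenever `M i j ≠ 2`. -/
def IsIrreducible {B : Type*} (M : CoxeterMatrix B) : Prop :=
  (SimpleGraph.fromRel (fun i j => M i j ≠ 2)).Connected

variable {B : Type*} {W : Type*} [Group W] {M : CoxeterMatrix B}

/-- The standard parabolic subgroup `W_I` generated by the simple reflections indexed by `I`. -/
def stdParabolic (cs : CoxeterSystem M W) (I : Set B) : Subgroup W :=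
  Subgroup.closure (cs.simple '' I)

/-- A parabolic subgroup: a conjugate of a standard parabolic subgroup. -/
def IsParabolic (cs : CoxeterSystem M W) (P : Subgroup W) : Prop :=
  ∃ (w : W) (I : Set B), P = (stdParabolic cs I).map (MulAut.conj w).toMonoidHom

/-- An element is essential if it lies in no proper parabolic subgroup. -/
def IsEssential (cs : CoxeterSystem M W) (w : W) : Prop :=
  ∀ P : Subgroup W, IsParabolic cs P → P ≠ ⊤ → w ∉ P

/-- A standard Coxeter element: the product of all the simple reflections, each occurring
exactly once, in some order. -/
def IsStdCoxeterElement (cs : CoxeterSystem M W) (w : W) : Prop :=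
  ∃ l : List B, l.Nodup ∧ (∀ i : B, i ∈ l) ∧ w = cs.wordProd l

/-- A Coxeter element: any conjugate of a standard Coxeter element. -/
def IsCoxeterElement (cs : CoxeterSystem M W) (w : W) : Prop :=
  ∃ (x c : W), IsStdCoxeterElement cs c ∧ w = x * c * x⁻¹

/-- Length of a shortest factorization of `w` as a product of elements of `Ts`. -/
noncomputable def reflLengthOn (Ts : Set W) (w : W) : ℕ :=
  sInf {k | ∃ l : List W, l.length = k ∧ (∀ t ∈ l, t ∈ Ts) ∧ l.prod = w}

/-- The reflection length `ℓ_T(w)`. -/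
noncomputable def reflLength (cs : CoxeterSystem M W) (w : W) : ℕ :=
  reflLengthOn {t | cs.IsReflection t} w

/-- A reduced reflection factorization of `w`. -/
def IsReducedReflFactorization (cs : CoxeterSystem M W) (w : W) (l : List W) : Prop :=
  (∀ t ∈ l, cs.IsReflection t) ∧ l.prod = w ∧ l.length = reflLength cs w

/-- The parabolic closure of a subset `X` of `W`: the intersection of all parabolic
subgroups containing `X` (which is the smallest such parabolic subgroup). -/
noncomputable def parabolicClosure (cs : CoxeterSystem M W) (X : Set W) : Subgroup W :=
  sInf {P | IsParabolic cs P ∧ X ⊆ ↑P}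

/-- An element `w` is straight if `ℓ(wᵐ) = |m| ℓ(w)` for all integers `m`. -/
def IsStraight (cs : CoxeterSystem M W) (w : W) : Prop :=
  ∀ m : ℤ, cs.length (w ^ m) = m.natAbs * cs.length w

/-- The standard geometric (Tits) representation of a Coxeter system on a real vector
space `V` with basis `(e_i)` and symmetric bilinear form `B(e_i, e_j) = -cos (π / m_{ij})`
(interpreted as `-1` when `m_{ij} = ∞`, i.e. `M i j = 0`). -/
structure GeomRep (cs : CoxeterSystem M W) (V : Type*) [AddCommGroup V] [Module ℝ V] where
  /-- the simple roots, a basis of `V` -/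
  e : Module.Basis B ℝ V
  /-- the bilinear form -/
  BF : V →ₗ[ℝ] V →ₗ[ℝ] ℝ
  /-- the action of `W` on `V` -/
  σ : W →* (V →ₗ[ℝ] V)
  hBF : ∀ i j, BF (e i) (e j) = if M i j = 0 then -1 else -Real.cos (Real.pi / (M i j : ℝ))
  hσ : ∀ i v, σ (cs.simple i) v = v - (2 * BF (e i) v) • e i

namespace GeomRep

variable {V : Type*} [AddCommGroup V] [Module ℝ V] {cs : CoxeterSystem M W}

/-- Roots. -/
def IsRoot (ρ : GeomRep cs V) (α : V) : Prop := ∃ (w : W) (i : B), α = ρ.σ w (ρ.e i)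

/-- Positive roots. -/
def IsPos (ρ : GeomRep cs V) (α : V) : Prop := ρ.IsRoot α ∧ ∀ i, 0 ≤ ρ.e.repr α i

/-- Negative roots. -/
def IsNeg (ρ : GeomRep cs V) (α : V) : Prop := ρ.IsRoot α ∧ ∀ i, ρ.e.repr α i ≤ 0

/-- The inversion set `Φ⁺(u)`: positive roots sent by `u` to negative roots. -/
def invSet (ρ : GeomRep cs V) (u : W) : Set V := {α | ρ.IsPos α ∧ ρ.IsNeg (ρ.σ u α)}

end GeomRep

end CoxPaper

open CoxPaper in
/-- In an irreducible infinite Coxeter system of rank `n`, two standard parabolic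
subgroups of rank `n - 1` are conjugate iff they are equal. -/
theorem stmt_5 {B W : Type*} [Fintype B] [Group W] {M : CoxeterMatrix B}
    (cs : CoxeterSystem M W) (hirr : IsIrreducible M) (hinf : Infinite W)
    (I J : Finset B) (hI : I.card = Fintype.card B - 1) (hJ : J.card = Fintype.card B - 1) :
    (∃ w : W, (stdParabolic cs ↑J).map (MulAut.conj w).toMonoidHom = stdParabolic cs ↑I)
      ↔ I = J := by
  classical
  constructor
  · rintro ⟨w, hw⟩
    exact CoxProof.main_conj cs hirr hinf I J hI hJ w hw
  · rintro rfl
    refine ⟨1, ?_⟩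
    have h1 : (MulAut.conj (1:W)).toMonoidHom = MonoidHom.id W := by
      ext x
      simp
    rw [h1, Subgroup.map_id]
end

section
/- Let (W,S) be a Coxeter system, and suppose W_I = wW_Jw⁻¹ for subsets I, J ⊆ S and some w ∈ W. Then |I| = |J|, and there exists w_0 ∈ wW_J such that w_0 maps the simple roots Δ_J bijectively onto Δ_I and I = w_0 J w_0⁻¹. -/
open List

section Dev
open CoxPaper CoxeterSystem

variable {B W : Type*} [Group W] {M : CoxeterMatrix B} {cs : CoxeterSystem M W}
variable {V : Type*} [AddCommGroup V] [Module ℝ V] (ρ : GeomRep cs V)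

noncomputable def cV (m : ℕ) : ℝ := if m = 0 then 1 else Real.cos (Real.pi / m)

lemma BF_ee (i j : B) : ρ.BF (ρ.e i) (ρ.e j) = -cV (M i j) := by
  rw [ρ.hBF]; unfold cV; split_ifs <;> simp

lemma BF_self (i : B) : ρ.BF (ρ.e i) (ρ.e i) = 1 := by
  rw [BF_ee, M.diagonal]; unfold cV; norm_num

lemma BF_symm (x y : V) : ρ.BF x y = ρ.BF y x := by
  have : ρ.BF = ρ.BF.flip := by
    apply LinearMap.ext_basis ρ.e ρ.e
    intro i j
    simp only [LinearMap.flip_apply, ρ.hBF, M.symmetric i j]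
  conv_lhs => rw [this]
  rfl

lemma sigma_mul_apply (w w' : W) (v : V) : ρ.σ (w * w') v = ρ.σ w (ρ.σ w' v) := by
  rw [map_mul]; rfl

lemma sigma_inv_cancel (w : W) (v : V) : ρ.σ w⁻¹ (ρ.σ w v) = v := by
  rw [← sigma_mul_apply, inv_mul_cancel, map_one]; rfl

lemma sigma_cancel_inv (w : W) (v : V) : ρ.σ w (ρ.σ w⁻¹ v) = v := by
  rw [← sigma_mul_apply, mul_inv_cancel, map_one]; rfl

lemma sigma_inj (w : W) : Function.Injective (ρ.σ w) := by
  intro x y h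
  have := congrArg (ρ.σ w⁻¹) h
  rwa [sigma_inv_cancel, sigma_inv_cancel] at this

lemma BF_invariant (w : W) (x y : V) : ρ.BF (ρ.σ w x) (ρ.σ w y) = ρ.BF x y := by
  induction w using cs.simple_induction generalizing x y with
  | simple i =>
    rw [ρ.hσ, ρ.hσ]
    simp only [map_sub, map_smul, LinearMap.sub_apply, LinearMap.smul_apply, smul_eq_mul]
    rw [BF_self]
    have h1 : ρ.BF x (ρ.e i) = ρ.BF (ρ.e i) x := BF_symm ρ _ _
    ring_nf
    rw [h1]
    ring
  | one => simp only [map_one]; rfl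
  | mul w w' hw hw' =>
    rw [sigma_mul_apply, sigma_mul_apply, hw, hw']

end Dev
/-! ### The Chebyshev-type sequence -/

noncomputable def Sf (m : ℕ) (k : ℕ) : ℝ :=
  if m = 0 then (k : ℝ) else Real.sin (k * Real.pi / m) / Real.sin (Real.pi / m)

lemma sin_pi_div_pos {m : ℕ} (hm0 : m ≠ 0) (hm1 : m ≠ 1) : 0 < Real.sin (Real.pi / m) := by
  apply Real.sin_pos_of_pos_of_lt_pi
  · positivity
  · rw [div_lt_iff₀ (by positivity)]
    nlinarith [Real.pi_pos, show (2:ℝ) ≤ m by exact_mod_cast Nat.two_le_iff m |>.mpr ⟨hm0, hm1⟩]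

lemma Sf_zero (m : ℕ) : Sf m 0 = 0 := by simp [Sf]

lemma Sf_one {m : ℕ} (hm1 : m ≠ 1) : Sf m 1 = 1 := by
  unfold Sf
  split_ifs with h
  · simp
  · rw [Nat.cast_one, one_mul, div_self (ne_of_gt (sin_pi_div_pos h hm1))]

lemma Sf_rec {m : ℕ} (hm1 : m ≠ 1) (k : ℕ) :
    Sf m (k + 2) = 2 * cV m * Sf m (k + 1) - Sf m k := by
  unfold Sf cV
  split_ifs with h
  · push_cast; ring
  · have hs := ne_of_gt (sin_pi_div_pos h hm1)
    have h1 : ((k:ℝ) + 2) * Real.pi / m = (k + 1) * Real.pi / m + Real.pi / m := by ring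
    have h2 : (k:ℝ) * Real.pi / m = (k + 1) * Real.pi / m - Real.pi / m := by ring
    push_cast
    rw [h1, h2, Real.sin_add, Real.sin_sub]
    field_simp
    ring

lemma Sf_nonneg {m : ℕ} (k : ℕ) (h : m = 0 ∨ k ≤ m) : 0 ≤ Sf m k := by
  unfold Sf
  rcases eq_or_ne m 0 with hm | hm
  · simp [hm]
  · rcases eq_or_ne m 1 with hm1 | hm1
    · subst hm1
      norm_num [Real.sin_pi]
    · simp only [hm, if_false]
      apply div_nonneg _ (le_of_lt (sin_pi_div_pos hm hm1))
      apply Real.sin_nonneg_of_nonneg_of_le_pi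
      · positivity
      · rw [div_le_iff₀ (by positivity)]
        have : (k:ℝ) ≤ m := by
          rcases h with h | h
          · omega
          · exact_mod_cast h
        nlinarith [Real.pi_pos]

section Dev2
open CoxPaper CoxeterSystem List

variable {B W : Type*} [Group W] {M : CoxeterMatrix B} {cs : CoxeterSystem M W}
variable {V : Type*} [AddCommGroup V] [Module ℝ V] (ρ : GeomRep cs V)

/-- Coordinatewise nonnegativity. -/
def PosV (ρ : GeomRep cs V) (v : V) : Prop := ∀ k, 0 ≤ ρ.e.repr v k

lemma sigma_simple_self (i : B) : ρ.σ (cs.simple i) (ρ.e i) = -ρ.e i := by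
  rw [ρ.hσ, BF_self]
  module

lemma sigma_simple_pair₁ (i i' : B) (p q : ℝ) :
    ρ.σ (cs.simple i) (p • ρ.e i + q • ρ.e i') =
      (2 * cV (M i i') * q - p) • ρ.e i + q • ρ.e i' := by
  rw [ρ.hσ]
  rw [map_add, map_smul, map_smul, smul_eq_mul, smul_eq_mul, BF_self, BF_ee]
  module

lemma sigma_simple_pair₂ (i i' : B) (p q : ℝ) :
    ρ.σ (cs.simple i') (p • ρ.e i + q • ρ.e i') =
      p • ρ.e i + (2 * cV (M i i') * p - q) • ρ.e i' := by
  rw [ρ.hσ]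
  rw [map_add, map_smul, map_smul, smul_eq_mul, smul_eq_mul, BF_self ρ i',
    BF_ee ρ i' i, M.symmetric i' i]
  module

lemma alt_sigma (i i' : B) (hm1 : M i i' ≠ 1) (k : ℕ) :
    ρ.σ (cs.wordProd (alternatingWord i i' k)) (ρ.e i) =
      (if Even k then Sf (M i i') (k+1) else Sf (M i i') k) • ρ.e i +
      (if Even k then Sf (M i i') k else Sf (M i i') (k+1)) • ρ.e i' := by
  induction k with
  | zero =>
    rw [show alternatingWord i i' 0 = [] from rfl, cs.wordProd_nil, map_one]
    simp only [Module.End.one_apply, if_pos (Even.zero), Sf_zero, Sf_one hm1]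
    module
  | succ k ih =>
    rw [alternatingWord_succ', wordProd_cons, sigma_mul_apply, ih]
    by_cases he : Even k
    · have he1 : ¬ Even (k+1) := by simp [Nat.even_add_one, he]
      simp only [if_pos he, if_neg he1]
      rw [sigma_simple_pair₂, show k + 1 + 1 = k + 2 from rfl, Sf_rec hm1 k]
    · have he1 : Even (k+1) := by simpa [Nat.even_add_one] using he
      simp only [if_neg he, if_pos he1]
      rw [sigma_simple_pair₁, show k + 1 + 1 = k + 2 from rfl, Sf_rec hm1 k]

/-- The descent-path decomposition. -/
lemma path (cs : CoxeterSystem M W) : ∀ (n : ℕ) (w : W) (i i' : B), cs.length w = n →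
    ¬cs.IsRightDescent w i →
    ∃ (u : W) (r : ℕ), w = u * cs.wordProd (alternatingWord i i' r) ∧
      cs.length u + r = cs.length w ∧ ¬cs.IsRightDescent u i ∧ ¬cs.IsRightDescent u i' := by
  intro n
  induction n using Nat.strong_induction_on with
  | _ n ih =>
    intro w i i' hn hwi
    by_cases hd : cs.IsRightDescent w i'
    · set w₁ := w * cs.simple i' with hw₁
      have hlen : cs.length w₁ + 1 = cs.length w := (cs.isRightDescent_iff).mp hd
      have hw₁i' : ¬cs.IsRightDescent w₁ i' := by
        rw [cs.not_isRightDescent_iff, hw₁, cs.simple_mul_simple_cancel_right, ← hlen]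
      obtain ⟨u, r, h1, h2, h3, h4⟩ :=
        ih (cs.length w₁) (by omega) w₁ i' i rfl hw₁i'
      refine ⟨u, r + 1, ?_, by omega, h4, h3⟩
      rw [alternatingWord_succ, wordProd_concat, ← mul_assoc, ← h1, hw₁,
        cs.simple_mul_simple_cancel_right]
    · exact ⟨w, 0, by simp [alternatingWord, wordProd_nil], by simp, hwi, hd⟩

theorem pos_of_not_descent : ∀ (n : ℕ) (w : W) (i : B), cs.length w = n →
    ¬cs.IsRightDescent w i → PosV ρ (ρ.σ w (ρ.e i)) := by
  intro n
  induction n using Nat.strong_induction_on with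
  | _ n ih =>
    intro w i hn hwi
    by_cases hw1 : w = 1
    · subst hw1
      intro k
      classical
      simp only [map_one, Module.End.one_apply, Module.Basis.repr_self]
      rw [Finsupp.single_apply]
      split <;> norm_num
    · obtain ⟨i', hdi'⟩ := cs.exists_rightDescent_of_ne_one hw1
      have hii' : i ≠ i' := fun h => hwi (h ▸ hdi')
      obtain ⟨u, r, hweq, hlen, hui, hui'⟩ := path cs n w i i' hn hwi
      have hr : r ≠ 0 := by
        rintro rfl
        rw [show alternatingWord i i' 0 = [] from rfl, cs.wordProd_nil, mul_one] at hweq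
        exact (hweq ▸ hui') hdi'
      have hlu : cs.length u < n := by omega
      have Pu : PosV ρ (ρ.σ u (ρ.e i)) := ih _ hlu u i rfl hui
      have Pu' : PosV ρ (ρ.σ u (ρ.e i')) := ih _ hlu u i' rfl hui'
      have hm1 : M i i' ≠ 1 := M.off_diagonal i i' hii'
      -- case analysis on r vs m
      by_cases hm0 : M i i' = 0
      · -- infinite case: cone applies
        have key := alt_sigma ρ i i' hm1 r
        have hnn : ∀ k', 0 ≤ Sf (M i i') k' := fun k' => Sf_nonneg k' (Or.inl hm0)
        intro k
        rw [hweq, sigma_mul_apply, key, map_add, map_smul, map_smul, map_add,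
          Finsupp.add_apply, map_smul, map_smul, Finsupp.smul_apply, Finsupp.smul_apply,
          smul_eq_mul, smul_eq_mul]
        have hPu := Pu k; have hPu' := Pu' k
        split
        · exact add_nonneg (mul_nonneg (hnn _) hPu) (mul_nonneg (hnn _) hPu')
        · exact add_nonneg (mul_nonneg (hnn _) hPu) (mul_nonneg (hnn _) hPu')
      · rcases lt_trichotomy r (M i i') with hlt | heq | hgt
        · -- cone case
          have key := alt_sigma ρ i i' hm1 r
          have hnn : ∀ k', k' ≤ M i i' → 0 ≤ Sf (M i i') k' := fun k' hk' =>
            Sf_nonneg k' (Or.inr hk')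
          intro k
          rw [hweq, sigma_mul_apply, key, map_add, map_smul, map_smul, map_add,
            Finsupp.add_apply, map_smul, map_smul, Finsupp.smul_apply, Finsupp.smul_apply,
            smul_eq_mul, smul_eq_mul]
          have h1 := hnn r (by omega)
          have h2 := hnn (r+1) (by omega)
          have hPu := Pu k; have hPu' := Pu' k
          split
          · exact add_nonneg (mul_nonneg h2 hPu) (mul_nonneg h1 hPu')
          · exact add_nonneg (mul_nonneg h1 hPu) (mul_nonneg h2 hPu')
        · -- r = m : contradiction with ¬descent at i
          exfalso
          subst heq
          have hbraid := cs.wordProd_braidWord_eq i i'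
          rw [show braidWord M i' i = alternatingWord i' i (M i' i) from rfl,
            M.symmetric i' i] at hbraid
          obtain ⟨m', hm'⟩ : ∃ m', M i i' = m' + 1 := ⟨M i i' - 1, by omega⟩
          have hsplit : alternatingWord i' i (M i i') = (alternatingWord i i' m').concat i := by
            rw [hm']; rfl
          have hwsi : w * cs.simple i = u * cs.wordProd (alternatingWord i i' m') := by
            calc w * cs.simple i
                = u * (cs.wordProd (alternatingWord i i' m') * cs.simple i) * cs.simple i := by
                  rw [hweq, hbraid, hsplit, cs.wordProd_concat]
              _ = u * cs.wordProd (alternatingWord i i' m') := by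
                  rw [mul_assoc, mul_assoc, cs.simple_mul_simple_self, mul_one]
          apply hwi
          have hle : cs.length (w * cs.simple i) ≤ cs.length u + m' := by
            rw [hwsi]
            calc cs.length (u * cs.wordProd (alternatingWord i i' m')) ≤
                cs.length u + cs.length (cs.wordProd (alternatingWord i i' m')) :=
                  cs.length_mul_le _ _
              _ ≤ cs.length u + m' := by
                  have := cs.length_wordProd_le (alternatingWord i i' m')
                  rw [length_alternatingWord] at this
                  omega
          unfold CoxeterSystem.IsRightDescent
          omega
        · -- r > m : contradiction with additivity
          exfalso
          have hnred := cs.not_isReduced_alternatingWord i i' hm0 hgt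
          have hlt' : cs.length (cs.wordProd (alternatingWord i i' r)) < r := by
            have hle := cs.length_wordProd_le (alternatingWord i i' r)
            rw [length_alternatingWord] at hle
            rcases lt_or_eq_of_le hle with h | h
            · exact h
            · exact absurd (by rw [CoxeterSystem.IsReduced, length_alternatingWord]; exact h) hnred
          have : cs.length w < cs.length u + r := by
            calc cs.length w ≤ cs.length u + cs.length (cs.wordProd (alternatingWord i i' r)) := by
                  rw [hweq]; exact cs.length_mul_le _ _
              _ < cs.length u + r := by omega
          omega

theorem pos_sigma (w : W) (i : B) (h : ¬cs.IsRightDescent w i) : PosV ρ (ρ.σ w (ρ.e i)) :=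
  pos_of_not_descent ρ (cs.length w) w i rfl h

theorem neg_sigma (w : W) (i : B) (h : cs.IsRightDescent w i) :
    ∀ k, ρ.e.repr (ρ.σ w (ρ.e i)) k ≤ 0 := by
  intro k
  have h2 : ¬cs.IsRightDescent (w * cs.simple i) i := by
    rw [cs.not_isRightDescent_iff, cs.simple_mul_simple_cancel_right]
    exact ((cs.isRightDescent_iff).mp h).symm
  have hp := pos_sigma ρ (w * cs.simple i) i h2 k
  have : ρ.σ w (ρ.e i) = -ρ.σ (w * cs.simple i) (ρ.e i) := by
    rw [sigma_mul_apply, sigma_simple_self, map_neg, neg_neg]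
  rw [this, map_neg, Finsupp.neg_apply]
  linarith

theorem sigma_faithful (w : W) (hw : ∀ v, ρ.σ w v = v) : w = 1 := by
  by_contra h1
  obtain ⟨i, hi⟩ := cs.exists_rightDescent_of_ne_one h1
  have := neg_sigma ρ w i hi i
  rw [hw (ρ.e i)] at this
  simp only [Module.Basis.repr_self, Finsupp.single_eq_same] at this
  linarith

end Dev2
section Dev3
open CoxPaper CoxeterSystem List

variable {B W : Type*} [Group W] {M : CoxeterMatrix B} {cs : CoxeterSystem M W}
variable {V : Type*} [AddCommGroup V] [Module ℝ V] (ρ : GeomRep cs V)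

lemma span_invariant (I : Set B) {x : W} (hx : x ∈ Subgroup.closure (cs.simple '' I)) :
    (∀ v ∈ Submodule.span ℝ (ρ.e '' I), ρ.σ x v ∈ Submodule.span ℝ (ρ.e '' I)) ∧
    (∀ v ∈ Submodule.span ℝ (ρ.e '' I), ρ.σ x⁻¹ v ∈ Submodule.span ℝ (ρ.e '' I)) := by
  induction hx using Subgroup.closure_induction with
  | mem x hx =>
    obtain ⟨j, hj, rfl⟩ := hx
    have hgen : ∀ v ∈ Submodule.span ℝ (ρ.e '' I), ρ.σ (cs.simple j) v ∈
        Submodule.span ℝ (ρ.e '' I) := by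
      intro v hv
      rw [ρ.hσ]
      exact Submodule.sub_mem _ hv (Submodule.smul_mem _ _
        (Submodule.subset_span ⟨j, hj, rfl⟩))
    exact ⟨hgen, by rwa [cs.inv_simple]⟩
  | one => simp only [map_one, inv_one]; exact ⟨fun v hv => hv, fun v hv => hv⟩
  | mul x y hx hy ihx ihy =>
    refine ⟨fun v hv => ?_, fun v hv => ?_⟩
    · rw [sigma_mul_apply]; exact ihx.1 _ (ihy.1 _ hv)
    · rw [mul_inv_rev, sigma_mul_apply]; exact ihy.2 _ (ihx.2 _ hv)
  | inv x hx ihx =>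
    refine ⟨ihx.2, ?_⟩
    rw [inv_inv]; exact ihx.1

lemma sigma_sub_mem_span (I : Set B) {x : W} (hx : x ∈ Subgroup.closure (cs.simple '' I)) :
    ∀ v, ρ.σ x v - v ∈ Submodule.span ℝ (ρ.e '' I) := by
  induction hx using Subgroup.closure_induction with
  | mem x hx =>
    obtain ⟨j, hj, rfl⟩ := hx
    intro v
    rw [ρ.hσ]
    have : v - (2 * ρ.BF (ρ.e j) v) • ρ.e j - v = -((2 * ρ.BF (ρ.e j) v) • ρ.e j) := by module
    rw [this]
    exact Submodule.neg_mem _ (Submodule.smul_mem _ _ (Submodule.subset_span ⟨j, hj, rfl⟩))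
  | one => intro v; simp only [map_one, Module.End.one_apply, sub_self, Submodule.zero_mem]
  | mul x y hx hy ihx ihy =>
    intro v
    have : ρ.σ (x * y) v - v = (ρ.σ x (ρ.σ y v) - ρ.σ y v) + (ρ.σ y v - v) := by
      rw [sigma_mul_apply]; module
    rw [this]
    exact Submodule.add_mem _ (ihx _) (ihy _)
  | inv x hx ihx =>
    intro v
    have : ρ.σ x⁻¹ v - v = -(ρ.σ x⁻¹ (ρ.σ x v - v)) := by
      rw [map_sub, sigma_inv_cancel]; module
    rw [this]
    exact Submodule.neg_mem _ ((span_invariant ρ I hx).2 _ (ihx v))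

variable [Fintype B]

lemma conj_simple_claim (w0 : W) (I J : Finset B)
    (hJpos : ∀ j ∈ J, PosV ρ (ρ.σ w0 (ρ.e j)))
    (hIpos : ∀ i ∈ I, PosV ρ (ρ.σ w0⁻¹ (ρ.e i)))
    (hconj : ∀ j ∈ J, w0 * cs.simple j * w0⁻¹ ∈ Subgroup.closure (cs.simple '' (I : Set B))) :
    ∀ j ∈ J, ∃ i ∈ I, ρ.σ w0 (ρ.e j) = ρ.e i ∧ w0 * cs.simple j * w0⁻¹ = cs.simple i := by
  classical
  intro j hj
  set β := ρ.σ w0 (ρ.e j) with hβdef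
  set t := w0 * cs.simple j * w0⁻¹ with htdef
  -- β lies in the span of the simple roots indexed by I
  have htβ : ρ.σ t β = -β := by
    rw [htdef, sigma_mul_apply, sigma_mul_apply, hβdef, sigma_inv_cancel,
      sigma_simple_self, map_neg]
  have hβsp : β ∈ Submodule.span ℝ (ρ.e '' (I : Set B)) := by
    have h1 := sigma_sub_mem_span ρ (I : Set B) (hconj j hj) β
    rw [htβ] at h1
    have h2 : -β - β = (-2 : ℝ) • β := by module
    rw [h2] at h1
    have := Submodule.smul_mem _ (-2 : ℝ)⁻¹ h1
    rwa [smul_smul, show (-2:ℝ)⁻¹ * -2 = 1 by norm_num, one_smul] at this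
  have hsupp : ∀ k, k ∉ I → ρ.e.repr β k = 0 := by
    intro k hk
    have := (ρ.e.mem_span_image).mp hβsp
    by_contra h
    exact hk (this (Finsupp.mem_support_iff.mpr h))
  set c : B → ℝ := fun i => ρ.e.repr β i with hcdef
  have hβsum : β = ∑ i, c i • ρ.e i := (ρ.e.sum_repr β).symm
  have hej : (ρ.e j : V) = ∑ i, c i • ρ.σ w0⁻¹ (ρ.e i) := by
    calc (ρ.e j : V) = ρ.σ w0⁻¹ β := by rw [hβdef, sigma_inv_cancel]
      _ = ∑ i, c i • ρ.σ w0⁻¹ (ρ.e i) := by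
          rw [hβsum, map_sum]
          exact Finset.sum_congr rfl fun i _ => by rw [map_smul]
  have hcoord : ∀ k, ρ.e.repr (ρ.e j) k = ∑ i, c i * ρ.e.repr (ρ.σ w0⁻¹ (ρ.e i)) k := by
    intro k
    rw [hej, map_sum, Finsupp.finset_sum_apply]
    exact Finset.sum_congr rfl fun i _ => by rw [map_smul, Finsupp.smul_apply, smul_eq_mul]
  have hcnn : ∀ i, 0 ≤ c i := fun i => hJpos j hj i
  have hFnn : ∀ i k, 0 ≤ c i * ρ.e.repr (ρ.σ w0⁻¹ (ρ.e i)) k := by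
    intro i k
    by_cases hi : i ∈ I
    · exact mul_nonneg (hcnn i) (hIpos i hi k)
    · rw [hcdef]; simp only [hsupp i hi, zero_mul, le_refl]
  have hj1 : (1 : ℝ) = ∑ i, c i * ρ.e.repr (ρ.σ w0⁻¹ (ρ.e i)) j := by
    have := hcoord j
    rwa [Module.Basis.repr_self, Finsupp.single_eq_same] at this
  obtain ⟨i₀, -, hi₀⟩ : ∃ i₀ ∈ Finset.univ, c i₀ * ρ.e.repr (ρ.σ w0⁻¹ (ρ.e i₀)) j ≠ 0 := by
    apply Finset.exists_ne_zero_of_sum_ne_zero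
    rw [← hj1]; norm_num
  have hci₀ : c i₀ ≠ 0 := fun h => hi₀ (by rw [h, zero_mul])
  have hi₀I : i₀ ∈ I := by
    by_contra h
    exact hci₀ (hsupp i₀ h)
  set d : ℝ := ρ.e.repr (ρ.σ w0⁻¹ (ρ.e i₀)) j with hddef
  have hd0 : d ≠ 0 := fun h => hi₀ (by rw [h, mul_zero])
  have hdpos : 0 < d := lt_of_le_of_ne (hIpos i₀ hi₀I j) (Ne.symm hd0)
  have hoff : ∀ k, k ≠ j → ρ.e.repr (ρ.σ w0⁻¹ (ρ.e i₀)) k = 0 := by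
    intro k hk
    have h0 : (0 : ℝ) = ∑ i, c i * ρ.e.repr (ρ.σ w0⁻¹ (ρ.e i)) k := by
      have := hcoord k
      rwa [Module.Basis.repr_self, Finsupp.single_apply, if_neg (fun h => hk h.symm)] at this
    have := (Finset.sum_eq_zero_iff_of_nonneg (fun i _ => hFnn i k)).mp h0.symm i₀
      (Finset.mem_univ i₀)
    rcases mul_eq_zero.mp this with h | h
    · exact absurd h hci₀
    · exact h
  have hγ : ρ.σ w0⁻¹ (ρ.e i₀) = d • ρ.e j := by
    apply ρ.e.repr.injective
    ext k
    rw [map_smul, Finsupp.smul_apply, Module.Basis.repr_self, Finsupp.single_apply, smul_eq_mul]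
    by_cases hk : k = j
    · subst hk; rw [if_pos rfl, mul_one]
    · rw [hoff k hk, if_neg (fun h => hk h.symm), mul_zero]
  have hd1 : d = 1 := by
    have hnorm : ρ.BF (ρ.σ w0⁻¹ (ρ.e i₀)) (ρ.σ w0⁻¹ (ρ.e i₀)) = 1 := by
      rw [BF_invariant, BF_self]
    rw [hγ, LinearMap.map_smul₂, map_smul, smul_eq_mul, smul_eq_mul, BF_self] at hnorm
    nlinarith
  rw [hd1, one_smul] at hγ
  have hβei₀ : β = ρ.e i₀ := by
    rw [hβdef, ← hγ, sigma_cancel_inv]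
  refine ⟨i₀, hi₀I, hβei₀, ?_⟩
  -- group-level equality via faithfulness
  have hσt : ∀ v, ρ.σ t v = ρ.σ (cs.simple i₀) v := by
    intro v
    rw [htdef, sigma_mul_apply, sigma_mul_apply, ρ.hσ j, map_sub, map_smul,
      sigma_cancel_inv, ρ.hσ i₀]
    have harg : ρ.BF (ρ.e j) (ρ.σ w0⁻¹ v) = ρ.BF (ρ.e i₀) v := by
      rw [← BF_invariant ρ w0 (ρ.e j) (ρ.σ w0⁻¹ v), sigma_cancel_inv, ← hβdef, hβei₀]
    rw [harg, ← hβdef, hβei₀]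
  have ht1 : t * cs.simple i₀ = 1 := by
    apply sigma_faithful ρ
    intro v
    rw [sigma_mul_apply, hσt, ← sigma_mul_apply, cs.simple_mul_simple_self, map_one]
    rfl
  have h2 := mul_eq_one_iff_eq_inv.mp ht1
  rwa [cs.inv_simple] at h2

end Dev3
open CoxPaper in
/-- If `W_I = w W_J w⁻¹` then `|I| = |J|` and some `w₀ ∈ w W_J` maps `Δ_J` onto `Δ_I`
and conjugates the simple reflections of `J` onto those of `I`. -/
theorem stmt_7 {B W : Type*} [Fintype B] [Group W] {M : CoxeterMatrix B}
    (cs : CoxeterSystem M W) {V : Type*} [AddCommGroup V] [Module ℝ V]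
    (ρ : GeomRep cs V) (I J : Finset B) (w : W)
    (h : stdParabolic cs ↑I = (stdParabolic cs ↑J).map (MulAut.conj w).toMonoidHom) :
    I.card = J.card ∧ ∃ u ∈ stdParabolic cs (↑J : Set B),
      (ρ.σ (w * u)) '' (ρ.e '' ↑J) = ρ.e '' ↑I ∧
      cs.simple '' ↑I = (fun x => (w * u) * x * (w * u)⁻¹) '' (cs.simple '' ↑J) := by
  classical
  set PJ := stdParabolic cs (↑J : Set B) with hPJ
  set T : Set W := (fun x => w * x) '' (PJ : Set W) with hT
  have hTne : T.Nonempty := ⟨w * 1, 1, PJ.one_mem, rfl⟩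
  -- choose a minimal length element of the coset
  have hLne : {n | ∃ y ∈ T, cs.length y = n}.Nonempty := by
    obtain ⟨y, hy⟩ := hTne
    exact ⟨cs.length y, y, hy, rfl⟩
  obtain ⟨w₀, hw₀T, hw₀len⟩ : ∃ y ∈ T, cs.length y = sInf {n | ∃ y ∈ T, cs.length y = n} :=
    Nat.sInf_mem hLne
  have hmin : ∀ y ∈ T, cs.length w₀ ≤ cs.length y := by
    intro y hy
    rw [hw₀len]
    exact Nat.sInf_le ⟨y, hy, rfl⟩
  obtain ⟨x, hxPJ, hwx⟩ := hw₀T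
  simp only at hwx
  -- basic membership facts
  have hsJ : ∀ j ∈ J, cs.simple j ∈ PJ := fun j hj =>
    Subgroup.subset_closure ⟨j, hj, rfl⟩
  have hsI : ∀ i ∈ I, ∃ z ∈ PJ, w * z * w⁻¹ = cs.simple i := by
    intro i hi
    have : cs.simple i ∈ stdParabolic cs (↑I : Set B) :=
      Subgroup.subset_closure ⟨i, hi, rfl⟩
    rw [h] at this
    obtain ⟨z, hz, hz2⟩ := Subgroup.mem_map.mp this
    exact ⟨z, hz, hz2⟩
  -- ascent conditions from minimality
  have hAscJ : ∀ j ∈ J, ¬cs.IsRightDescent w₀ j := by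
    intro j hj hdesc
    have hmem : w₀ * cs.simple j ∈ T :=
      ⟨x * cs.simple j, PJ.mul_mem hxPJ (hsJ j hj), by rw [← hwx, mul_assoc]⟩
    exact absurd (hmin _ hmem) (not_le.mpr hdesc)
  have hAscI : ∀ i ∈ I, ¬cs.IsRightDescent w₀⁻¹ i := by
    intro i hi hdesc
    obtain ⟨z, hz, hz2⟩ := hsI i hi
    have hmem : cs.simple i * w₀ ∈ T := by
      refine ⟨z * x, PJ.mul_mem hz hxPJ, ?_⟩
      simp only
      rw [← hz2, ← hwx]
      group
    have hlen1 : cs.length (w₀⁻¹ * cs.simple i) = cs.length (cs.simple i * w₀) := by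
      rw [← cs.length_inv]
      congr 1
      rw [mul_inv_rev, inv_inv, cs.inv_simple]
    unfold CoxeterSystem.IsRightDescent at hdesc
    rw [hlen1, cs.length_inv] at hdesc
    exact absurd (hmin _ hmem) (not_le.mpr hdesc)
  -- positivity
  have PosJ : ∀ j ∈ J, PosV ρ (ρ.σ w₀ (ρ.e j)) := fun j hj =>
    pos_sigma ρ w₀ j (hAscJ j hj)
  have PosI : ∀ i ∈ I, PosV ρ (ρ.σ w₀⁻¹ (ρ.e i)) := fun i hi =>
    pos_sigma ρ w₀⁻¹ i (hAscI i hi)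
  -- conjugation conditions
  have hconjJ : ∀ j ∈ J, w₀ * cs.simple j * w₀⁻¹ ∈
      Subgroup.closure (cs.simple '' (↑I : Set B)) := by
    intro j hj
    have : w₀ * cs.simple j * w₀⁻¹ ∈ stdParabolic cs (↑I : Set B) := by
      rw [h]
      refine Subgroup.mem_map.mpr ⟨x * cs.simple j * x⁻¹,
        PJ.mul_mem (PJ.mul_mem hxPJ (hsJ j hj)) (PJ.inv_mem hxPJ), ?_⟩
      simp only [MulEquiv.toMonoidHom_eq_coe, MonoidHom.coe_coe, MulAut.conj_apply]
      rw [← hwx]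
      group
    exact this
  have hconjI : ∀ i ∈ I, w₀⁻¹ * cs.simple i * (w₀⁻¹)⁻¹ ∈
      Subgroup.closure (cs.simple '' (↑J : Set B)) := by
    intro i hi
    obtain ⟨z, hz, hz2⟩ := hsI i hi
    have heq : w₀⁻¹ * cs.simple i * (w₀⁻¹)⁻¹ = x⁻¹ * z * x := by
      rw [inv_inv, ← hz2, ← hwx]
      group
    rw [heq]
    exact PJ.mul_mem (PJ.mul_mem (PJ.inv_mem hxPJ) hz) hxPJ
  -- the two claims
  have ClaimA := conj_simple_claim ρ w₀ I J PosJ PosI hconjJ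
  have ClaimB := conj_simple_claim ρ w₀⁻¹ J I PosI
    (by rw [inv_inv]; exact PosJ) hconjI
  -- Goal 2 : image of simple roots
  have Goal2 : (ρ.σ w₀) '' (ρ.e '' ↑J) = ρ.e '' ↑I := by
    ext v
    constructor
    · rintro ⟨-, ⟨j, hj, rfl⟩, rfl⟩
      obtain ⟨i, hi, heq, -⟩ := ClaimA j hj
      exact ⟨i, hi, heq.symm⟩
    · rintro ⟨i, hi, rfl⟩
      obtain ⟨j, hj, heq, -⟩ := ClaimB i hi
      refine ⟨ρ.e j, ⟨j, hj, rfl⟩, ?_⟩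
      rw [← heq, sigma_cancel_inv]
  -- Goal 1 : cardinalities
  have Goal1 : I.card = J.card := by
    have h1 : ((ρ.e '' ↑I) : Set V).ncard = I.card := by
      rw [Set.ncard_image_of_injective _ ρ.e.injective, Set.ncard_coe_finset]
    have h2 : ((ρ.e '' ↑J) : Set V).ncard = J.card := by
      rw [Set.ncard_image_of_injective _ ρ.e.injective, Set.ncard_coe_finset]
    rw [← h1, ← Goal2, Set.ncard_image_of_injective _ (sigma_inj ρ w₀), h2]
  -- Goal 3 : conjugation of simple reflections
  have Goal3 : cs.simple '' ↑I = (fun g => w₀ * g * w₀⁻¹) '' (cs.simple '' ↑J) := by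
    ext g
    constructor
    · rintro ⟨i, hi, rfl⟩
      obtain ⟨j, hj, -, heq⟩ := ClaimB i hi
      refine ⟨cs.simple j, ⟨j, hj, rfl⟩, ?_⟩
      simp only
      rw [← heq, inv_inv]
      group
    · rintro ⟨-, ⟨j, hj, rfl⟩, rfl⟩
      obtain ⟨i, hi, -, heq⟩ := ClaimA j hj
      exact ⟨i, hi, heq.symm⟩
  refine ⟨Goal1, x, hxPJ, ?_, ?_⟩
  · rw [hwx]; exact Goal2
  · rw [hwx]; exact Goal3
end

section
/- Let (W,S) be a Coxeter system and w ∈ W a straight element with reduced expression w = s_{j_1}⋯s_{j_k}. Set β_i = s_{j_1}⋯s_{j_{i−1}}(e_{j_i}) for 1 ≤ i ≤ k (so β_1 = e_{j_1}). Then for every m ≥ 1 and every i, the root w^m(β_i) is positive; that is, β_i ∈ Φ⁺(w⁻¹) but β_i ∉ Φ⁺(w^m) for all m ≥ 1. -/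
open List

namespace CoxPaperAux

open Real List CoxeterSystem CoxPaper

variable {B : Type*} (M : CoxeterMatrix B)

/-- `-cos (π / m)` coefficient, with `m = 0` interpreted as `∞`. -/
noncomputable def cc (i i' : B) : ℝ := if M i i' = 0 then 1 else Real.cos (π / (M i i' : ℝ))

/-- `sin (n π / m) / sin (π / m)`, or `n` when `m = 0`. -/
noncomputable def SS (i i' : B) (n : ℕ) : ℝ :=
  if M i i' = 0 then n else Real.sin (n * (π / (M i i' : ℝ))) / Real.sin (π / (M i i' : ℝ))

variable {M}

lemma two_le_M {i i' : B} (h : i ≠ i') (h0 : M i i' ≠ 0) : 2 ≤ M i i' := by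
  have := M.off_diagonal i i' h
  omega

lemma theta_pos {i i' : B} (h : i ≠ i') (h0 : M i i' ≠ 0) : 0 < π / (M i i' : ℝ) := by
  apply div_pos Real.pi_pos
  exact_mod_cast Nat.pos_of_ne_zero h0

lemma theta_lt_pi {i i' : B} (h : i ≠ i') (h0 : M i i' ≠ 0) : π / (M i i' : ℝ) < π := by
  have h2 : (2 : ℝ) ≤ (M i i' : ℝ) := by exact_mod_cast two_le_M h h0
  calc π / (M i i' : ℝ) ≤ π / 2 := by
        apply div_le_div_of_nonneg_left Real.pi_pos.le (by norm_num) h2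
    _ < π := by linarith [Real.pi_pos]

lemma sin_theta_pos {i i' : B} (h : i ≠ i') (h0 : M i i' ≠ 0) :
    0 < Real.sin (π / (M i i' : ℝ)) :=
  Real.sin_pos_of_pos_of_lt_pi (theta_pos h h0) (theta_lt_pi h h0)

@[simp] lemma SS_zero (i i' : B) : SS M i i' 0 = 0 := by
  unfold SS; split <;> simp

lemma SS_one {i i' : B} (h : i ≠ i') : SS M i i' 1 = 1 := by
  unfold SS; split
  · simp
  · rename_i h0
    rw [Nat.cast_one, one_mul, div_self (sin_theta_pos h h0).ne']

lemma SS_rec {i i' : B} (h : i ≠ i') (n : ℕ) :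
    SS M i i' (n + 1 + 1) = 2 * cc M i i' * SS M i i' (n + 1) - SS M i i' n := by
  unfold SS cc; split
  · push_cast; ring
  · rename_i h0
    set θ := π / (M i i' : ℝ)
    have hs := (sin_theta_pos h h0).ne'
    have e1 : ((n : ℝ) + 1 + 1) * θ = (((n : ℝ) + 1) * θ) + θ := by ring
    have e2 : (n : ℝ) * θ = (((n : ℝ) + 1) * θ) - θ := by ring
    have key : Real.sin (((n : ℝ) + 1 + 1) * θ) =
        2 * Real.cos θ * Real.sin (((n : ℝ) + 1) * θ) - Real.sin ((n : ℝ) * θ) := by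
      rw [e1, e2, Real.sin_add, Real.sin_sub]; ring
    push_cast
    rw [key]
    field_simp

lemma SS_nonneg {i i' : B} (h : i ≠ i') {n : ℕ} (hn : M i i' = 0 ∨ n ≤ M i i') :
    0 ≤ SS M i i' n := by
  unfold SS; split
  · positivity
  · rename_i h0
    rcases hn with h' | h'
    · exact absurd h' h0
    apply div_nonneg _ (sin_theta_pos h h0).le
    apply Real.sin_nonneg_of_nonneg_of_le_pi
    · positivity
    · calc (n : ℝ) * (π / (M i i' : ℝ)) ≤ (M i i' : ℝ) * (π / (M i i' : ℝ)) := by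
            apply mul_le_mul_of_nonneg_right (by exact_mod_cast h') (theta_pos h h0).le
        _ = π := by field_simp

lemma cc_symm (i i' : B) : cc M i i' = cc M i' i := by unfold cc; rw [M.symmetric i i']

lemma SS_symm (i i' : B) (n : ℕ) : SS M i i' n = SS M i' i n := by unfold SS; rw [M.symmetric i i']


variable {B W : Type*} [Group W] {M : CoxeterMatrix B} {cs : CoxeterSystem M W}
variable {V : Type*} [AddCommGroup V] [Module ℝ V] (ρ : CoxPaper.GeomRep cs V)

lemma sigma_mul_apply (u v : W) (x : V) : ρ.σ (u * v) x = ρ.σ u (ρ.σ v x) := by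
  rw [map_mul]; rfl

lemma sigma_one_apply (x : V) : ρ.σ 1 x = x := by rw [map_one]; rfl

lemma BF_self (i : B) : ρ.BF (ρ.e i) (ρ.e i) = 1 := by
  rw [ρ.hBF]
  simp [M.diagonal i, Real.cos_pi]

lemma BF_pair {i i' : B} (h : i ≠ i') : ρ.BF (ρ.e i) (ρ.e i') = - cc M i i' := by
  rw [ρ.hBF]
  unfold cc
  split <;> simp

lemma sigma_simple_self (i : B) : ρ.σ (cs.simple i) (ρ.e i) = - ρ.e i := by
  rw [ρ.hσ, BF_self]
  module

lemma alt_apply {i i' : B} (h : i ≠ i') (r : ℕ) :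
    ρ.σ (cs.wordProd (alternatingWord i i' r)) (ρ.e i)
      = (if Even r then SS M i i' (r + 1) else SS M i i' r) • ρ.e i
        + (if Even r then SS M i i' r else SS M i i' (r + 1)) • ρ.e i' := by
  induction r with
  | zero =>
    simp [alternatingWord, SS_one h]
  | succ n ih =>
    have key : ρ.σ (cs.wordProd (alternatingWord i i' (n + 1))) (ρ.e i)
        = ρ.σ (cs.simple (if Even n then i' else i))
            (ρ.σ (cs.wordProd (alternatingWord i i' n)) (ρ.e i)) := by
      rw [alternatingWord_succ', cs.wordProd_cons, sigma_mul_apply]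
    rw [key, ih]
    rcases Nat.even_or_odd n with he | ho
    · have hno : ¬ Even (n + 1) := by simp [Nat.even_add_one, he]
      simp only [if_pos he, if_neg hno]
      rw [ρ.hσ, map_add, map_smul, map_smul, BF_self, BF_pair ρ h.symm, cc_symm i' i,
        SS_rec h n]
      simp only [smul_eq_mul]
      module
    · have he' : ¬ Even n := Nat.not_even_iff_odd.mpr ho
      have hye : Even (n + 1) := Nat.even_add_one.mpr he'
      simp only [if_neg he', if_pos hye]
      rw [ρ.hσ, map_add, map_smul, map_smul, BF_self, BF_pair ρ h, SS_rec h n]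
      simp only [smul_eq_mul]
      module

omit [Module ℝ V] in
lemma strip (n : ℕ) : ∀ (u : W) (i i' : B), cs.length u ≤ n → i ≠ i' →
    ¬ cs.IsRightDescent u i → cs.IsRightDescent u i' →
    ∃ (v : W) (r : ℕ), 1 ≤ r ∧ u = v * cs.wordProd (alternatingWord i i' r) ∧
      cs.length u = cs.length v + r ∧ ¬ cs.IsRightDescent v i ∧ ¬ cs.IsRightDescent v i' := by
  induction n with
  | zero =>
    intro u i i' hlen _ _ hd
    have hu : u = 1 := cs.length_eq_zero_iff.mp (Nat.le_zero.mp hlen)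
    exact absurd (hu ▸ hd) (cs.not_isRightDescent_one i')
  | succ n ih =>
    intro u i i' hlen hne hnd hd
    have hlu' : cs.length (u * cs.simple i') + 1 = cs.length u := cs.isRightDescent_iff.mp hd
    have hnd' : ¬ cs.IsRightDescent (u * cs.simple i') i' := by
      rw [cs.not_isRightDescent_iff, cs.simple_mul_simple_cancel_right]
      omega
    have huu : u = (u * cs.simple i') * cs.simple i' := by
      rw [cs.simple_mul_simple_cancel_right]
    set u' := u * cs.simple i' 
    by_cases hdi : cs.IsRightDescent u' i
    · obtain ⟨v, r, hr, hdec, hl, hv1, hv2⟩ := ih u' i' i (by omega) hne.symm hnd' hdi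
      refine ⟨v, r + 1, by omega, ?_, by omega, hv2, hv1⟩
      rw [huu, hdec, alternatingWord_succ, cs.wordProd_concat, mul_assoc]
    · refine ⟨u', 1, le_refl 1, ?_, by omega, hdi, hnd'⟩
      have : alternatingWord i i' 1 = [i'] := rfl
      rw [this, cs.wordProd_singleton, ← huu]

lemma repr_sigma_nonneg : ∀ (n : ℕ) (u : W) (i : B), cs.length u = n →
    ¬ cs.IsRightDescent u i → ∀ j, 0 ≤ ρ.e.repr (ρ.σ u (ρ.e i)) j := by
  intro n
  induction n using Nat.strong_induction_on with
  | _ n ihn =>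
    intro u i hlen hnd j
    classical
    rcases eq_or_ne u 1 with rfl | hu
    · rw [sigma_one_apply, Module.Basis.repr_self, Finsupp.single_apply]
      split <;> norm_num
    · obtain ⟨i', hd⟩ := cs.exists_rightDescent_of_ne_one hu
      have hne : i ≠ i' := by rintro rfl; exact hnd hd
      obtain ⟨v, r, hr, hdec, hl, hv1, hv2⟩ := strip (cs.length u) u i i' le_rfl hne hnd hd
      -- bound r + 1 ≤ M i i' (if M i i' ≠ 0)
      have hb : M i i' = 0 ∨ r + 1 ≤ M i i' := by
        by_contra hcon
        push_neg at hcon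
        obtain ⟨hM0, hMlt⟩ := hcon
        have hsym : M.M i i' = M.M i' i := M.symmetric i i'
        have hM0' : M i' i ≠ 0 := by rwa [← M.symmetric i i']
        have hmlt : r + 1 > M i' i := by omega
        have hnotred := cs.not_isReduced_alternatingWord i' i hM0' hmlt
        apply hnotred
        unfold CoxeterSystem.IsReduced
        have hconc : cs.wordProd (alternatingWord i' i (r + 1))
            = cs.wordProd (alternatingWord i i' r) * cs.simple i := by
          rw [alternatingWord_succ, cs.wordProd_concat]
        have husi : u * cs.simple i = v * cs.wordProd (alternatingWord i' i (r + 1)) := by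
          rw [hconc, hdec, mul_assoc]
        have h1 : cs.length (u * cs.simple i) = cs.length u + 1 :=
          cs.not_isRightDescent_iff.mp hnd
        have h2 : cs.length (u * cs.simple i)
            ≤ cs.length v + cs.length (cs.wordProd (alternatingWord i' i (r + 1))) := by
          rw [husi]; exact cs.length_mul_le _ _
        have h3 : cs.length (cs.wordProd (alternatingWord i' i (r + 1))) ≤ r + 1 := by
          have := cs.length_wordProd_le (alternatingWord i' i (r + 1))
          rwa [length_alternatingWord] at this
        rw [length_alternatingWord]
        omega
      have hSr : 0 ≤ SS M i i' r := SS_nonneg hne (by omega)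
      have hSr1 : 0 ≤ SS M i i' (r + 1) := SS_nonneg hne (by omega)
      have hvlen : cs.length v < n := by omega
      have hvi := ihn (cs.length v) hvlen v i rfl hv1
      have hvi' := ihn (cs.length v) hvlen v i' rfl hv2
      rw [hdec, sigma_mul_apply, alt_apply ρ hne, map_add, map_smul, map_smul, map_add,
        map_smul, map_smul]
      simp only [Finsupp.coe_add, Finsupp.coe_smul, Pi.add_apply, Pi.smul_apply, smul_eq_mul]
      have p1 : 0 ≤ (if Even r then SS M i i' (r + 1) else SS M i i' r) := by
        split <;> assumption
      have p2 : 0 ≤ (if Even r then SS M i i' r else SS M i i' (r + 1)) := by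
        split <;> assumption
      have := hvi j
      have := hvi' j
      positivity

lemma isPos_sigma (u : W) (i : B) (hnd : ¬ cs.IsRightDescent u i) :
    ρ.IsPos (ρ.σ u (ρ.e i)) :=
  ⟨⟨u, i, rfl⟩, repr_sigma_nonneg ρ (cs.length u) u i rfl hnd⟩

lemma isNeg_sigma (u : W) (i : B) (hd : cs.IsRightDescent u i) :
    ρ.IsNeg (ρ.σ u (ρ.e i)) := by
  refine ⟨⟨u, i, rfl⟩, fun j => ?_⟩
  have hnd : ¬ cs.IsRightDescent (u * cs.simple i) i :=
    cs.isRightDescent_iff_not_isRightDescent_mul.mp hd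
  have : ρ.σ u (ρ.e i) = - ρ.σ (u * cs.simple i) (ρ.e i) := by
    rw [sigma_mul_apply, sigma_simple_self, map_neg, neg_neg]
  rw [this, map_neg]
  simp only [Finsupp.coe_neg, Pi.neg_apply, neg_nonpos]
  exact repr_sigma_nonneg ρ (cs.length (u * cs.simple i)) _ i rfl hnd j

end CoxPaperAux

open CoxPaper in
/-- For a straight element `w` with reduced expression `s_{j_1} ⋯ s_{j_k}` and roots
`β_i = s_{j_1} ⋯ s_{j_{i-1}}(e_{j_i})`: each `β_i` lies in `Φ⁺(w⁻¹)`, and `wᵐ(β_i)` is a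
positive root for all `m ≥ 1` (so `β_i ∉ Φ⁺(wᵐ)`). -/
theorem stmt_8 {B W : Type*} [Group W] {M : CoxeterMatrix B}
    (cs : CoxeterSystem M W) {V : Type*} [AddCommGroup V] [Module ℝ V]
    (ρ : GeomRep cs V) {w : W} (hw : IsStraight cs w)
    (l : List B) (hred : cs.IsReduced l) (hprod : cs.wordProd l = w)
    (i : Fin l.length) :
    ρ.IsPos (ρ.σ (cs.wordProd (l.take i)) (ρ.e (l.get i))) ∧
    ρ.IsNeg (ρ.σ w⁻¹ (ρ.σ (cs.wordProd (l.take i)) (ρ.e (l.get i)))) ∧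
    ∀ m : ℕ, 1 ≤ m →
      ρ.IsPos (ρ.σ (w ^ m) (ρ.σ (cs.wordProd (l.take i)) (ρ.e (l.get i)))) := by
    classical
  have hil : (i : ℕ) < l.length := i.isLt
  have hk : cs.length w = l.length := by rw [← hprod]; exact hred
  have htake : ∀ j : ℕ, j ≤ l.length → cs.length (cs.wordProd (l.take j)) = j := by
    intro j hj
    have h := CoxeterSystem.IsReduced.take hred j
    unfold CoxeterSystem.IsReduced at h
    rwa [List.length_take, min_eq_left hj] at h
  have hdroplen : ∀ j : ℕ, cs.length (cs.wordProd (l.drop j)) = l.length - j := by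
    intro j
    have h := CoxeterSystem.IsReduced.drop hred j
    unfold CoxeterSystem.IsReduced at h
    rwa [List.length_drop] at h
  have hsplit : ∀ j : ℕ, cs.wordProd (l.take j) * cs.wordProd (l.drop j) = w := by
    intro j; rw [← cs.wordProd_append, List.take_append_drop, hprod]
  have hinv : ∀ j : ℕ, w⁻¹ * cs.wordProd (l.take j) = (cs.wordProd (l.drop j))⁻¹ := by
    intro j
    rw [← hsplit j]
    group
  have hstep : cs.wordProd (l.take ((i : ℕ) + 1))
      = cs.wordProd (l.take (i : ℕ)) * cs.simple (l.get i) := by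
    rw [← List.take_concat_get' l (i : ℕ) hil, cs.wordProd_append, cs.wordProd_singleton,
      List.get_eq_getElem]
  -- Part 1
  have hnd1 : ¬ cs.IsRightDescent (cs.wordProd (l.take (i : ℕ))) (l.get i) := by
    rw [cs.not_isRightDescent_iff, ← hstep, htake ((i : ℕ) + 1) (by omega),
      htake (i : ℕ) (by omega)]
  refine ⟨CoxPaperAux.isPos_sigma ρ _ _ hnd1, ?_, ?_⟩
  -- Part 2
  · rw [← CoxPaperAux.sigma_mul_apply, hinv (i : ℕ)]
    apply CoxPaperAux.isNeg_sigma
    have h5 : cs.wordProd (l.drop (i : ℕ))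
        = cs.simple (l.get i) * cs.wordProd (l.drop ((i : ℕ) + 1)) := by
      rw [← cs.wordProd_cons, List.get_eq_getElem]
      congr 1
      exact List.drop_eq_getElem_cons hil
    have h6 : (cs.wordProd (l.drop (i : ℕ)))⁻¹ * cs.simple (l.get i)
        = (cs.wordProd (l.drop ((i : ℕ) + 1)))⁻¹ := by
      rw [h5, mul_inv_rev, cs.inv_simple, mul_assoc, cs.simple_mul_simple_self, mul_one]
    unfold CoxeterSystem.IsRightDescent
    rw [h6, cs.length_inv, cs.length_inv, hdroplen, hdroplen]
    omega
  -- Part 3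
  · intro m hm
    rw [← CoxPaperAux.sigma_mul_apply]
    apply CoxPaperAux.isPos_sigma
    have hpow : ∀ n : ℕ, cs.length (w ^ n) = n * l.length := by
      intro n
      have h := hw (n : ℤ)
      rw [zpow_natCast] at h
      simpa [hk] using h
    have hub : cs.length (w ^ m * cs.wordProd (l.take (i : ℕ)))
        ≤ m * l.length + (i : ℕ) := by
      have := cs.length_mul_le (w ^ m) (cs.wordProd (l.take (i : ℕ)))
      rw [hpow m, htake (i : ℕ) (by omega)] at this
      exact this
    have e4 : (w ^ m * cs.wordProd (l.take (i : ℕ))) * cs.simple (l.get i)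
        = w ^ (m + 1) * (cs.wordProd (l.drop ((i : ℕ) + 1)))⁻¹ := by
      rw [mul_assoc, ← hstep, ← hinv ((i : ℕ) + 1), pow_succ]
      group
    have hlb : m * l.length + (i : ℕ) + 1
        ≤ cs.length ((w ^ m * cs.wordProd (l.take (i : ℕ))) * cs.simple (l.get i)) := by
      rw [e4]
      have h7 := cs.length_mul_ge_length_sub_length (w ^ (m + 1))
        ((cs.wordProd (l.drop ((i : ℕ) + 1)))⁻¹)
      rw [hpow (m + 1), cs.length_inv, hdroplen] at h7
      have hm1 : 1 ≤ m := hm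
      have : (m + 1) * l.length = m * l.length + l.length := by ring
      omega
    unfold CoxeterSystem.IsRightDescent
    omega
end

section
/- Let (W,S) be a Coxeter system with S = {s_1,…,s_n}, and let w be the element s_n s_{n−1}⋯s_{j+1} s_{j−1}⋯s_1 (the product of all simple generators except s_j, in decreasing order of index). Then the reflection length of w equals its Coxeter length equals n−1: ℓ_T(w) = ℓ(w) = n−1. -/
open List

set_option maxHeartbeats 1000000

namespace CoxAux
open List Real


variable {n : ℕ}

/-- Gram-type matrix entries. -/
noncomputable def Aco (M : CoxeterMatrix (Fin n)) (i k : Fin n) : ℝ :=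
  if i = k then 2 else if M i k = 0 then 0 else -2 * Real.cos (Real.pi / (M i k : ℝ))

/-- The doubled representation space. -/
abbrev Vn (n : ℕ) := (Fin n → ℝ) × (Fin n → ℝ)

/-- The simple "root" vectors. -/
noncomputable def vt (i : Fin n) : Vn n := (Pi.single i 1, 0)

/-- The functionals. -/
noncomputable def fl (M : CoxeterMatrix (Fin n)) (i : Fin n) : Vn n →ₗ[ℝ] ℝ where
  toFun z := (∑ k, Aco M i k * z.1 k) + z.2 i
  map_add' z w := by
    simp only [Prod.fst_add, Pi.add_apply, Prod.snd_add, mul_add, Finset.sum_add_distrib]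
    ring
  map_smul' c z := by
    simp only [Prod.smul_fst, Pi.smul_apply, smul_eq_mul, Prod.smul_snd, RingHom.id_apply,
      Finset.mul_sum]
    rw [mul_add, Finset.mul_sum]
    congr 1
    exact Finset.sum_congr rfl fun k _ => by ring

/-- The pseudo-reflections. -/
noncomputable def sig (M : CoxeterMatrix (Fin n)) (i : Fin n) : Module.End ℝ (Vn n) :=
  LinearMap.id - (fl M i).smulRight (vt i)

theorem sig_apply (M : CoxeterMatrix (Fin n)) (i : Fin n) (z : Vn n) :
    sig M i z = z - fl M i z • vt i := rfl

theorem fl_apply (M : CoxeterMatrix (Fin n)) (i : Fin n) (z : Vn n) :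
    fl M i z = (∑ k, Aco M i k * z.1 k) + z.2 i := rfl

theorem fl_vt (M : CoxeterMatrix (Fin n)) (i k : Fin n) :
    fl M i (vt k) = Aco M i k := by
  simp [fl_apply, vt, Pi.single_apply, mul_ite, Finset.sum_ite_eq']

theorem Aco_diag (M : CoxeterMatrix (Fin n)) (i : Fin n) : Aco M i i = 2 := by simp [Aco]

theorem Aco_symm (M : CoxeterMatrix (Fin n)) (i k : Fin n) : Aco M i k = Aco M k i := by
  unfold Aco
  rcases eq_or_ne i k with rfl | h
  · simp
  · simp [h, h.symm, M.symmetric i k]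

theorem sig_sq (M : CoxeterMatrix (Fin n)) (i : Fin n) (z : Vn n) :
    sig M i (sig M i z) = z := by
  simp only [sig_apply, map_sub, map_smul, fl_vt, Aco_diag, smul_eq_mul]
  module

/-- Chebyshev-style power formula for an endomorphism satisfying a quadratic relation at `z`. -/
theorem cheb {V : Type*} [AddCommGroup V] [Module ℝ V] (T : Module.End ℝ V) (τ : ℝ) (z : V)
    (hz : T (T z) = τ • T z - z) (u : ℕ → ℝ) (h0 : u 0 = 0) (h1 : u 1 = 1)
    (hrec : ∀ p, u (p + 2) = τ * u (p + 1) - u p) :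
    ∀ p, (T ^ (p + 1)) z = u (p + 1) • T z - u p • z := by
  intro p
  induction p with
  | zero => simp [h0, h1]
  | succ p ih =>
    have h2 : (T ^ (p + 2)) z = T ((T ^ (p + 1)) z) := by
      rw [pow_succ']; rfl
    rw [h2, ih, map_sub, map_smul, map_smul, hz, hrec p]
    match_scalars <;> ring

theorem trig_u {m : ℕ} (hm : 3 ≤ m) :
    ∃ u : ℕ → ℝ, u 0 = 0 ∧ u 1 = 1 ∧
      (∀ p, u (p + 2) = (2 * Real.cos (2 * (Real.pi / m))) * u (p + 1) - u p) ∧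
      u m = 0 ∧ u (m - 1) = -1 := by
  set θ : ℝ := 2 * (Real.pi / m) with hθ
  have hmR : (m : ℝ) ≠ 0 := by positivity
  have hθpos : 0 < θ := by
    have : (0:ℝ) < Real.pi / m := by positivity
    linarith
  have hθlt : θ < Real.pi := by
    have h3 : (3:ℝ) ≤ m := by exact_mod_cast hm
    rw [hθ]
    rw [show (2:ℝ) * (Real.pi / m) = 2 * Real.pi / m by ring, div_lt_iff₀ (by positivity : (0:ℝ) < m)]
    nlinarith [Real.pi_pos]
  have hs : Real.sin θ ≠ 0 := ne_of_gt (Real.sin_pos_of_pos_of_lt_pi hθpos hθlt)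
  refine ⟨fun p => Real.sin (p * θ) / Real.sin θ, by simp, ?_, ?_, ?_, ?_⟩
  · simp [div_self hs]
  · intro p
    show Real.sin ((p + 2 : ℕ) * θ) / Real.sin θ
        = 2 * Real.cos θ * (Real.sin ((p + 1 : ℕ) * θ) / Real.sin θ) - Real.sin ((p : ℕ) * θ) / Real.sin θ
    have key : Real.sin ((p + 2 : ℕ) * θ)
        = 2 * Real.cos θ * Real.sin ((p + 1 : ℕ) * θ) - Real.sin (p * θ) := by
      push_cast
      have e1 : ((p : ℝ) + 2) * θ = ((p + 1) * θ) + θ := by ring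
      have e2 : (p : ℝ) * θ = ((p + 1) * θ) - θ := by ring
      rw [e1, e2, Real.sin_add, Real.sin_sub]
      ring
    rw [key]
    ring
  · show Real.sin ((m : ℕ) * θ) / Real.sin θ = 0
    have : (m : ℝ) * θ = 2 * Real.pi := by
      rw [hθ]; field_simp <;> ring_nf
    rw [this, Real.sin_two_pi, zero_div]
  · have hc : ((m - 1 : ℕ) : ℝ) = (m : ℝ) - 1 := by
      have : 1 ≤ m := by omega
      push_cast [this]; ring
    show Real.sin ((m - 1 : ℕ) * θ) / Real.sin θ = -1
    have h2 : ((m - 1 : ℕ) : ℝ) * θ = 2 * Real.pi - θ := by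
      rw [hc, hθ]; field_simp
    rw [h2, Real.sin_sub, Real.sin_two_pi, Real.cos_two_pi]
    field_simp
    ring

variable {n : ℕ} {M : CoxeterMatrix (Fin n)}

theorem Aco_off {i k : Fin n} (hik : i ≠ k) (h0 : M i k ≠ 0) :
    Aco M i k = -2 * Real.cos (Real.pi / (M i k : ℝ)) := by
  simp [Aco, hik, h0]

theorem Aco_sq_lt {i k : Fin n} (hik : i ≠ k) (h0 : M i k ≠ 0) :
    (Aco M i k) ^ 2 < 4 := by
  rw [Aco_off hik h0]
  have h2 : 2 ≤ M i k := by
    have := M.off_diagonal i k hik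
    omega
  have hmpos : (0:ℝ) < (M i k : ℝ) := by exact_mod_cast Nat.pos_of_ne_zero h0
  have hpos : (0:ℝ) < Real.pi / (M i k : ℝ) := div_pos Real.pi_pos hmpos
  have hlt : Real.pi / (M i k : ℝ) < Real.pi := by
    rw [div_lt_iff₀ hmpos]
    have : (2:ℝ) ≤ (M i k : ℝ) := by exact_mod_cast h2
    nlinarith [Real.pi_pos]
  have hsin : 0 < Real.sin (Real.pi / (M i k : ℝ)) :=
    Real.sin_pos_of_pos_of_lt_pi hpos hlt
  nlinarith [Real.sin_sq_add_cos_sq (Real.pi / (M i k : ℝ))]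

theorem sig_vt_self (i : Fin n) : sig M i (vt i) = -vt i := by
  rw [sig_apply, fl_vt, Aco_diag]
  module

theorem sig_vt (i k : Fin n) : sig M i (vt k) = vt k - Aco M i k • vt i := by
  rw [sig_apply, fl_vt]

theorem sig_fixed {i : Fin n} {y : Vn n} (h : fl M i y = 0) : sig M i y = y := by
  rw [sig_apply, h, zero_smul, sub_zero]

/-- Decomposition of a vector into plane + bi-kernel parts. -/
theorem decomp {i k : Fin n} (hik : i ≠ k) (hA : (Aco M i k) ^ 2 ≠ 4) (z : Vn n) :
    ∃ (α β : ℝ) (y : Vn n), fl M i y = 0 ∧ fl M k y = 0 ∧ z = α • vt i + β • vt k + y := by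
  set a := Aco M i k with ha
  have hΔ : 4 - a ^ 2 ≠ 0 := fun h => hA (by linarith [h])
  refine ⟨(2 * fl M i z - a * fl M k z) / (4 - a ^ 2),
      (2 * fl M k z - a * fl M i z) / (4 - a ^ 2),
      z - ((2 * fl M i z - a * fl M k z) / (4 - a ^ 2)) • vt i
        - ((2 * fl M k z - a * fl M i z) / (4 - a ^ 2)) • vt k, ?_, ?_, by module⟩
  · simp only [map_sub, map_smul, fl_vt, Aco_diag, smul_eq_mul, ← ha]
    field_simp
    ring
  · simp only [map_sub, map_smul, fl_vt, Aco_diag, smul_eq_mul, ← ha, ← Aco_symm M i k]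
    field_simp
    ring

theorem sig_braid (i k : Fin n) : ((sig M i * sig M k) ^ M i k) = 1 := by
  rcases eq_or_ne i k with rfl | hik
  · rw [M.diagonal i, pow_one]
    refine LinearMap.ext fun z => ?_
    rw [Module.End.mul_apply, sig_sq, Module.End.one_apply]
  rcases eq_or_ne (M i k) 0 with h0 | h0
  · rw [h0, pow_zero]
  set m := M i k with hm
  have hm2 : 2 ≤ m := by have := M.off_diagonal i k hik; omega
  set a := Aco M i k with ha
  have hsymm : Aco M k i = a := (Aco_symm M i k).symm
  set T : Module.End ℝ (Vn n) := sig M i * sig M k with hT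
  have hTz : ∀ z, T z = sig M i (sig M k z) := fun z => Module.End.mul_apply _ _ _
  have hker : ∀ y : Vn n, fl M i y = 0 → fl M k y = 0 → T y = y := by
    intro y h1 h2
    rw [hTz, sig_fixed h2, sig_fixed h1]
  have hkerpow : ∀ (p : ℕ) (y : Vn n), fl M i y = 0 → fl M k y = 0 → (T ^ p) y = y := by
    intro p y h1 h2
    induction p with
    | zero => rfl
    | succ p ih => rw [pow_succ, Module.End.mul_apply, hker y h1 h2, ih]
  have hTvi : T (vt i) = (a ^ 2 - 1) • vt i - a • vt k := by
    rw [hTz, sig_vt k i, hsymm, map_sub, map_smul, sig_vt_self, sig_vt i k, ← ha]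
    match_scalars <;> ring
  have hTvk : T (vt k) = a • vt i - vt k := by
    rw [hTz, sig_vt_self, map_neg, sig_vt i k, ← ha]
    match_scalars <;> ring
  have hq : ∀ z, (z = vt i ∨ z = vt k) → T (T z) = (a ^ 2 - 2) • T z - z := by
    rintro z (rfl | rfl)
    · rw [hTvi, map_sub, map_smul, map_smul, hTvi, hTvk]
      match_scalars <;> ring
    · rw [hTvk, map_sub, map_smul, hTvi, hTvk]
      match_scalars <;> ring
  have hplane : (T ^ m) (vt i) = vt i ∧ (T ^ m) (vt k) = vt k := by
    rcases eq_or_lt_of_le hm2 with h2 | h3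
    · have ha0 : a = 0 := by
        rw [ha, Aco_off hik h0, ← hm, ← h2]
        norm_num [Real.cos_pi_div_two]
      have hTvi' : T (vt i) = -vt i := by rw [hTvi, ha0]; module
      have hTvk' : T (vt k) = -vt k := by rw [hTvk, ha0]; module
      rw [← h2]
      constructor
      · rw [pow_two, Module.End.mul_apply, hTvi', map_neg, hTvi', neg_neg]
      · rw [pow_two, Module.End.mul_apply, hTvk', map_neg, hTvk', neg_neg]
    · have hm3 : 3 ≤ m := h3
      obtain ⟨u, h0u, h1u, hrec, hum, hum1⟩ := trig_u hm3
      have hτ : 2 * Real.cos (2 * (Real.pi / m)) = a ^ 2 - 2 := by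
        rw [ha, Aco_off hik h0, ← hm, Real.cos_two_mul]
        ring
      rw [hτ] at hrec
      have key : ∀ z, (z = vt i ∨ z = vt k) → (T ^ m) z = z := by
        intro z hz
        have hm' : m = (m - 1) + 1 := by omega
        rw [hm', cheb T (a ^ 2 - 2) z (hq z hz) u h0u h1u hrec (m - 1), ← hm', hum, hum1]
        module
      exact ⟨key _ (Or.inl rfl), key _ (Or.inr rfl)⟩
  refine LinearMap.ext fun z => ?_
  have hA : a ^ 2 ≠ 4 := ne_of_lt (Aco_sq_lt hik h0)
  obtain ⟨α, β, y, hy1, hy2, hzeq⟩ := decomp hik hA z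
  rw [Module.End.one_apply, hzeq, map_add, map_add, map_smul, map_smul, hplane.1, hplane.2,
    hkerpow m y hy1 hy2]

variable {n : ℕ} {M : CoxeterMatrix (Fin n)} {W : Type*} [Group W] (cs : CoxeterSystem M W)

/-- The doubled geometric representation. -/
noncomputable def phi : W →* Module.End ℝ (Vn n) :=
  cs.lift ⟨fun i => sig M i, fun i k => sig_braid i k⟩

@[simp]
theorem phi_simple (i : Fin n) : phi cs (cs.simple i) = sig M i :=
  cs.lift_apply_simple (fun i k => sig_braid i k) i

theorem phi_snd (ω : List (Fin n)) (z : Vn n) : ((phi cs (cs.wordProd ω)) z).2 = z.2 := by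
  induction ω generalizing z with
  | nil => rw [CoxeterSystem.wordProd_nil, map_one]; rfl
  | cons a ω ih =>
    rw [CoxeterSystem.wordProd_cons, map_mul, Module.End.mul_apply, phi_simple, sig_apply]
    have : (((phi cs (cs.wordProd ω)) z) - fl M a ((phi cs (cs.wordProd ω)) z) • vt a).2
        = ((phi cs (cs.wordProd ω)) z).2 := by
      simp [vt]
    rw [this, ih]

theorem phi_fst (ω : List (Fin n)) {b : Fin n} (hb : b ∉ ω) (z : Vn n) :
    ((phi cs (cs.wordProd ω)) z).1 b = z.1 b := by
  induction ω generalizing z with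
  | nil => rw [CoxeterSystem.wordProd_nil, map_one]; rfl
  | cons a ω ih =>
    have hba : b ≠ a := fun h => hb (h ▸ List.mem_cons_self)
    have hbω : b ∉ ω := fun h => hb (List.mem_cons_of_mem a h)
    rw [CoxeterSystem.wordProd_cons, map_mul, Module.End.mul_apply, phi_simple, sig_apply]
    have : (((phi cs (cs.wordProd ω)) z) - fl M a ((phi cs (cs.wordProd ω)) z) • vt a).1 b
        = ((phi cs (cs.wordProd ω)) z).1 b := by
      simp [vt, Pi.single_apply, hba]
    rw [this, ih hbω]

theorem fix_kills (ω : List (Fin n)) (hnd : ω.Nodup) (z : Vn n)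
    (hz : phi cs (cs.wordProd ω) z = z) : ∀ a ∈ ω, fl M a z = 0 := by
  induction ω generalizing z with
  | nil => intro a ha; cases ha
  | cons a ω ih =>
    obtain ⟨haω, hnd'⟩ := List.nodup_cons.1 hnd
    rw [CoxeterSystem.wordProd_cons, map_mul, Module.End.mul_apply, phi_simple] at hz
    set y := (phi cs (cs.wordProd ω)) z with hy
    have hya : y.1 a = z.1 a := phi_fst cs ω haω z
    have h1 : (sig M a y).1 a = z.1 a := by rw [hz]
    have h2 : (sig M a y).1 a = y.1 a - fl M a y := by
      rw [sig_apply]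
      simp [vt, Pi.single_apply]
    have hfla : fl M a y = 0 := by
      rw [h2, hya] at h1; linarith
    have hzy : z = y := by rw [← hz, sig_fixed hfla]
    have hfix : phi cs (cs.wordProd ω) z = z := by rw [← hy, ← hzy]
    intro b hb
    rcases List.mem_cons.1 hb with rfl | hbω
    · rw [hzy]; exact hfla
    · exact ih hnd' z hfix b hbω

variable {n : ℕ} {M : CoxeterMatrix (Fin n)} {W : Type*} [Group W] (cs : CoxeterSystem M W)

theorem refl_line {t : W} (ht : cs.IsReflection t) :
    ∃ u : Vn n, ∀ z : Vn n, ∃ c : ℝ, phi cs t z - z = c • u := by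
  obtain ⟨x, i, rfl⟩ := ht
  refine ⟨phi cs x (vt i), fun z => ⟨-(fl M i (phi cs x⁻¹ z)), ?_⟩⟩
  have hxx : ∀ v : Vn n, phi cs x (phi cs x⁻¹ v) = v := by
    intro v
    rw [← Module.End.mul_apply, ← map_mul, mul_inv_cancel, map_one, Module.End.one_apply]
  rw [map_mul, map_mul, Module.End.mul_apply, Module.End.mul_apply, phi_simple, sig_apply,
    map_sub, map_smul, hxx]
  module

theorem prod_span (l : List W) (hrefl : ∀ t ∈ l, cs.IsReflection t) :
    ∃ ul : List (Vn n), ul.length = l.length ∧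
      ∀ z : Vn n, phi cs l.prod z - z ∈ Submodule.span ℝ {x | x ∈ ul} := by
  induction l with
  | nil =>
    exact ⟨[], rfl, fun z => by
      rw [List.prod_nil, map_one, Module.End.one_apply, sub_self]; exact Submodule.zero_mem _⟩
  | cons t l ih =>
    obtain ⟨ul, hlen, hul⟩ := ih (fun t' ht' => hrefl t' (List.mem_cons_of_mem t ht'))
    obtain ⟨u, hu⟩ := refl_line cs (hrefl t (List.mem_cons_self))
    refine ⟨u :: ul, by simp [hlen], fun z => ?_⟩
    have key : phi cs (t :: l).prod z - z
        = (phi cs t (phi cs l.prod z) - phi cs l.prod z) + (phi cs l.prod z - z) := by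
      rw [List.prod_cons, map_mul, Module.End.mul_apply]; abel
    rw [key]
    apply Submodule.add_mem
    · obtain ⟨c, hc⟩ := hu (phi cs l.prod z)
      rw [hc]
      exact Submodule.smul_mem _ _ (Submodule.subset_span (by simp))
    · refine Submodule.span_mono (fun x hx => ?_) (hul z)
      simp only [Set.mem_setOf_eq] at hx ⊢
      exact List.mem_cons_of_mem u hx

theorem main_bound (j : Fin n) (ω : List (Fin n)) (hnd : ω.Nodup)
    (hmem : ∀ a, a ≠ j → a ∈ ω)
    (l : List W) (hrefl : ∀ t ∈ l, cs.IsReflection t) (hprod : l.prod = cs.wordProd ω) :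
    n - 1 ≤ l.length := by
  set w0 := cs.wordProd ω with hw0
  set E : Module.End ℝ (Vn n) := phi cs w0 - 1 with hE
  have hEapp : ∀ z : Vn n, E z = phi cs w0 z - z := fun z => rfl
  have hker : Module.finrank ℝ (LinearMap.ker E) ≤ n + 1 := by
    set g : Vn n →ₗ[ℝ] (Fin n → ℝ) × ℝ :=
      LinearMap.prod (LinearMap.fst ℝ _ _) ((LinearMap.proj j).comp (LinearMap.snd ℝ _ _)) with hg
    have hinj : Function.Injective (g.comp (LinearMap.ker E).subtype) := by
      rw [← LinearMap.ker_eq_bot, LinearMap.ker_eq_bot']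
      rintro ⟨z, hzker⟩ hz
      rw [LinearMap.mem_ker, hEapp, sub_eq_zero] at hzker
      have hkill : ∀ a ∈ ω, fl M a z = 0 := fix_kills cs ω hnd z hzker
      have hzz : g z = 0 := hz
      have hz1 : z.1 = 0 := congrArg Prod.fst hzz
      have hzj : z.2 j = 0 := congrArg Prod.snd hzz
      have hz2 : ∀ a, z.2 a = 0 := by
        intro a
        rcases eq_or_ne a j with rfl | haj
        · exact hzj
        · have hk := hkill a (hmem a haj)
          rw [fl_apply] at hk
          simpa [hz1] using hk
      apply Subtype.ext
      exact Prod.ext_iff.2 ⟨hz1, funext hz2⟩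
    calc Module.finrank ℝ (LinearMap.ker E)
        ≤ Module.finrank ℝ ((Fin n → ℝ) × ℝ) :=
          LinearMap.finrank_le_finrank_of_injective hinj
      _ = n + 1 := by simp
  obtain ⟨ul, hullen, hul⟩ := prod_span cs l hrefl
  have hrange : Module.finrank ℝ (LinearMap.range E) ≤ l.length := by
    have hle : LinearMap.range E ≤ Submodule.span ℝ {x | x ∈ ul} := by
      rintro v ⟨z, rfl⟩
      rw [hEapp, ← hprod]
      exact hul z
    calc Module.finrank ℝ (LinearMap.range E)
        ≤ Module.finrank ℝ (Submodule.span ℝ {x | x ∈ ul}) := Submodule.finrank_mono hle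
      _ ≤ ul.toFinset.card := by
          rw [show {x | x ∈ ul} = (↑ul.toFinset : Set (Vn n)) by simp]
          exact finrank_span_finset_le_card _
      _ ≤ ul.length := ul.toFinset_card_le
      _ = l.length := hullen
  have hrn : Module.finrank ℝ (LinearMap.range E) + Module.finrank ℝ (LinearMap.ker E)
      = Module.finrank ℝ (Vn n) := LinearMap.finrank_range_add_finrank_ker E
  have hV : Module.finrank ℝ (Vn n) = n + n := by simp [Vn]
  omega
theorem omega_len {n : ℕ} (j : Fin n) :
    (((List.finRange n).filter (fun i => i ≠ j)).reverse).length = n - 1 := by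
  rw [List.length_reverse, ← List.countP_eq_length_filter]
  have h1 := (List.length_eq_countP_add_countP (fun i : Fin n => decide (i ≠ j))
    (l := List.finRange n)).symm
  rw [List.length_finRange] at h1
  have h2 : (List.finRange n).countP (fun a => decide ¬(decide (a ≠ j) = true)) = 1 := by
    have he : (fun a : Fin n => decide ¬(decide (a ≠ j) = true)) = (fun i => i == j) := by
      funext i
      by_cases h : i = j <;> simp [h]
    rw [he, show (List.finRange n).countP (fun i => i == j) = (List.finRange n).count j from rfl]
    exact List.count_eq_one_of_mem (List.nodup_finRange n) (List.mem_finRange j)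
  omega

end CoxAux


open CoxPaper in
/-- For `w = s_n s_{n-1} ⋯ s_{j+1} s_{j-1} ⋯ s_1` (all simple generators except `s_j`, in
decreasing order), `ℓ_T(w) = ℓ(w) = n - 1`. -/
theorem stmt_13 {n : ℕ} {W : Type*} [Group W] {M : CoxeterMatrix (Fin n)}
    (cs : CoxeterSystem M W) (j : Fin n) :
    reflLength cs (cs.wordProd (((List.finRange n).filter (fun i => i ≠ j)).reverse)) = n - 1 ∧
    cs.length (cs.wordProd (((List.finRange n).filter (fun i => i ≠ j)).reverse)) = n - 1 := by
  classical
  set ω : List (Fin n) := ((List.finRange n).filter (fun i => i ≠ j)).reverse with hω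
  have hnd : ω.Nodup := List.nodup_reverse.2 ((List.nodup_finRange n).filter _)
  have hmem : ∀ a : Fin n, a ≠ j → a ∈ ω := by
    intro a ha
    rw [hω, List.mem_reverse, List.mem_filter]
    exact ⟨List.mem_finRange a, by simpa using ha⟩
  have hlen : ω.length = n - 1 := CoxAux.omega_len j
  set w0 := cs.wordProd ω with hw0
  have hmemS : (n - 1) ∈ {k | ∃ l : List W, l.length = k ∧
      (∀ t ∈ l, t ∈ {t | cs.IsReflection t}) ∧ l.prod = w0} := by
    refine ⟨ω.map cs.simple, by rw [List.length_map, hlen], ?_, rfl⟩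
    intro t ht
    obtain ⟨i, _, rfl⟩ := List.mem_map.1 ht
    exact cs.isReflection_simple i
  have hub : reflLength cs w0 ≤ n - 1 := Nat.sInf_le hmemS
  have hlbR : n - 1 ≤ reflLength cs w0 := by
    refine le_csInf ⟨_, hmemS⟩ fun k hk => ?_
    obtain ⟨l, hl, hr, hp⟩ := hk
    rw [← hl]
    exact CoxAux.main_bound cs j ω hnd hmem l (fun t ht => hr t ht) hp
  have hlenub : cs.length w0 ≤ n - 1 := by
    calc cs.length w0 ≤ ω.length := cs.length_wordProd_le ω
      _ = n - 1 := hlen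
  have hlenlb : n - 1 ≤ cs.length w0 := by
    obtain ⟨ω', hlen', hw'⟩ := cs.exists_reduced_word w0
    have hb := CoxAux.main_bound cs j ω hnd hmem (ω'.map cs.simple)
      (fun t ht => by obtain ⟨i, _, rfl⟩ := List.mem_map.1 ht; exact cs.isReflection_simple i)
      hw'.symm
    rwa [List.length_map, ← hlen'.eq, ← hw'] at hb
  exact ⟨le_antisymm hub hlbR, le_antisymm hlenub hlenlb⟩
end

section
/- In the Coxeter group W of type affine D̃_4 with simple generators s_1,…,s_5 (s_3 adjacent to each of s_1, s_2, s_4, s_5, all edge labels 3), the element v = s_4 s_3 s_4 s_5 s_3 s_2 of the parabolic subgroup W' = ⟨s_2, s_3, s_4, s_5⟩ (of type D_4) satisfies: s_5 s_4 commutes with v, but s_5 s_4 does not lie in the cyclic group ⟨v⟩. -/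
open List

namespace CoxPaper

/-- The Coxeter matrix of type `D̃₄`: the central node is `2`; the nodes `0, 1, 3, 4` are
each joined to `2` with label `3`, and all other pairs commute. -/
def D4affMatrix : CoxeterMatrix (Fin 5) where
  M := Matrix.of fun i j => if i = j then 1 else if i = 2 ∨ j = 2 then 3 else 2
  isSymm := by decide
  diagonal := by decide
  off_diagonal := by simp only [Matrix.of_apply]; decide

end CoxPaper


namespace CoxPaper

private theorem my_inv_self {G : Type*} [Group G] {x : G} (hx : x * x = 1) : x⁻¹ = x :=
  inv_eq_of_mul_eq_one_right hx

private theorem my_braid {G : Type*} [Group G] {x y : G} (hx : x * x = 1) (hy : y * y = 1)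
    (h : (x * y) ^ 3 = 1) : ∀ z : G, x * (y * (x * z)) = y * (x * (y * z)) := by
  have hx' := my_inv_self hx
  have hy' := my_inv_self hy
  have h3 : x * y * (x * y) * (x * y) = 1 := by rw [← h, pow_succ, pow_succ, pow_one]
  have h' : (x * (y * x)) * (y * (x * y)) = 1 := by rw [← h3]; group
  have keyA : x * (y * x) = (y * (x * y))⁻¹ := eq_inv_of_mul_eq_one_left h'
  have keyB : x * (y * x) = y * (x * y) := by
    rw [keyA]; simp [mul_inv_rev, hx', hy', mul_assoc]
  intro z
  calc x * (y * (x * z)) = (x * (y * x)) * z := by group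
    _ = (y * (x * y)) * z := by rw [keyB]
    _ = y * (x * (y * z)) := by group

private theorem my_comm {G : Type*} [Group G] {x y : G} (hx : x * x = 1) (hy : y * y = 1)
    (h : (x * y) ^ 2 = 1) : x * y = y * x := by
  have hx' := my_inv_self hx
  have hy' := my_inv_self hy
  have h' : (x * y) * (x * y) = 1 := by rw [← h, pow_two]
  have := my_inv_self h'
  rw [← this, mul_inv_rev, hx', hy']

private theorem my_comm' {G : Type*} [Group G] {x y : G} (hx : x * x = 1) (hy : y * y = 1)
    (h : (x * y) ^ 2 = 1) : ∀ z : G, x * (y * z) = y * (x * z) := by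
  intro z
  rw [← mul_assoc, my_comm hx hy h, mul_assoc]

/-- A concrete realization of the generators as signed permutations (acting on
`Fin 8`, thought of as `±e₁, …, ±e₄`), via the quotient map from the affine Weyl
group of type `D̃₄` to the finite Weyl group of type `D₄`. -/
private def gperm : Fin 5 → Equiv.Perm (Fin 8)
  | 0 => Equiv.swap 0 1 * Equiv.swap 4 5
  | 1 => Equiv.swap 0 5 * Equiv.swap 1 4
  | 2 => Equiv.swap 1 2 * Equiv.swap 5 6
  | 3 => Equiv.swap 2 3 * Equiv.swap 6 7
  | 4 => Equiv.swap 2 7 * Equiv.swap 3 6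

set_option maxRecDepth 4000 in
private theorem gperm_liftable : CoxeterMatrix.IsLiftable D4affMatrix gperm := by
  show ∀ i i', (gperm i * gperm i') ^ D4affMatrix i i' = 1
  decide

end CoxPaper

set_option maxRecDepth 10000 in
open CoxPaper in
/-- In the Coxeter group of type `D̃₄` (generators `s_1, …, s_5` indexed here by
`0, …, 4`, center `s_3 = 2`), the element `v = s_4 s_3 s_4 s_5 s_3 s_2` commutes with
`s_5 s_4`, but `s_5 s_4 ∉ ⟨v⟩`. -/
theorem stmt_19 {W : Type*} [Group W] (cs : CoxeterSystem D4affMatrix W) :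
    (cs.wordProd [4, 3]) * (cs.wordProd [3, 2, 3, 4, 2, 1]) =
      (cs.wordProd [3, 2, 3, 4, 2, 1]) * (cs.wordProd [4, 3]) ∧
    cs.wordProd [4, 3] ∉ Subgroup.zpowers (cs.wordProd [3, 2, 3, 4, 2, 1]) := by

  have hsq : ∀ (i : Fin 5) (z : W), cs.simple i * (cs.simple i * z) = z := by
    intro i z
    rw [← mul_assoc, cs.simple_mul_simple_self, one_mul]
  have hm : ∀ i j : Fin 5, (cs.simple i * cs.simple j) ^ (D4affMatrix i j) = 1 :=
    cs.simple_mul_simple_pow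
  have hdcd : ∀ z : W, cs.simple 3 * (cs.simple 2 * (cs.simple 3 * z)) =
      cs.simple 2 * (cs.simple 3 * (cs.simple 2 * z)) :=
    my_braid (cs.simple_mul_simple_self 3) (cs.simple_mul_simple_self 2)
      (by have := hm 3 2; rwa [show D4affMatrix 3 2 = 3 from rfl] at this)
  have hece : ∀ z : W, cs.simple 4 * (cs.simple 2 * (cs.simple 4 * z)) =
      cs.simple 2 * (cs.simple 4 * (cs.simple 2 * z)) :=
    my_braid (cs.simple_mul_simple_self 4) (cs.simple_mul_simple_self 2)
      (by have := hm 4 2; rwa [show D4affMatrix 4 2 = 3 from rfl] at this)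
  have hde : ∀ z : W, cs.simple 3 * (cs.simple 4 * z) = cs.simple 4 * (cs.simple 3 * z) :=
    my_comm' (cs.simple_mul_simple_self 3) (cs.simple_mul_simple_self 4)
      (by have := hm 3 4; rwa [show D4affMatrix 3 4 = 2 from rfl] at this)
  have hbe : ∀ z : W, cs.simple 1 * (cs.simple 4 * z) = cs.simple 4 * (cs.simple 1 * z) :=
    my_comm' (cs.simple_mul_simple_self 1) (cs.simple_mul_simple_self 4)
      (by have := hm 1 4; rwa [show D4affMatrix 1 4 = 2 from rfl] at this)
  have hbd : cs.simple 1 * cs.simple 3 = cs.simple 3 * cs.simple 1 :=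
    my_comm (cs.simple_mul_simple_self 1) (cs.simple_mul_simple_self 3)
      (by have := hm 1 3; rwa [show D4affMatrix 1 3 = 2 from rfl] at this)
  constructor
  · -- commutation
    simp only [CoxeterSystem.wordProd_cons, CoxeterSystem.wordProd_nil, mul_one, mul_assoc]
    have hL : cs.simple 4 * (cs.simple 3 * (cs.simple 3 * (cs.simple 2 * (cs.simple 3 *
        (cs.simple 4 * (cs.simple 2 * cs.simple 1)))))) =
        cs.simple 2 * (cs.simple 3 * (cs.simple 4 * (cs.simple 2 *
        (cs.simple 3 * cs.simple 1)))) := by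
      rw [hsq, hde, hece, ← hdcd, ← hde]
    have hR : cs.simple 3 * (cs.simple 2 * (cs.simple 3 * (cs.simple 4 * (cs.simple 2 *
        (cs.simple 1 * (cs.simple 4 * cs.simple 3)))))) =
        cs.simple 2 * (cs.simple 3 * (cs.simple 4 * (cs.simple 2 *
        (cs.simple 3 * cs.simple 1)))) := by
      rw [hbe, hbd, hece, hdcd, hsq]
    rw [hL, hR]
  · -- non-membership, via the finite quotient
    intro hmem
    obtain ⟨k, hk⟩ := Subgroup.mem_zpowers_iff.mp hmem
    set f : W →* Equiv.Perm (Fin 8) := cs.lift ⟨gperm, gperm_liftable⟩ with hf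
    have hfw : ∀ l : List (Fin 5), f (cs.wordProd l) = (l.map gperm).prod := by
      intro l
      induction l with
      | nil => simp [CoxeterSystem.wordProd_nil]
      | cons i t ih =>
        rw [CoxeterSystem.wordProd_cons, map_mul, ih, List.map_cons, List.prod_cons, hf,
          cs.lift_apply_simple]
    set V : Equiv.Perm (Fin 8) := (([3, 2, 3, 4, 2, 1] : List (Fin 5)).map gperm).prod with hV
    set U : Equiv.Perm (Fin 8) := (([4, 3] : List (Fin 5)).map gperm).prod with hU
    have hVU : V ^ k = U := by
      rw [hV, hU, ← hfw, ← hfw, ← map_zpow, hk]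
    have h4 : V ^ (4 : ℤ) = 1 := by
      rw [show (4 : ℤ) = ((4 : ℕ) : ℤ) from rfl, zpow_natCast]
      decide
    have key : ∀ m : ℕ, m < 4 → V ^ m ≠ U := by decide
    have h0 : 0 ≤ k % 4 := Int.emod_nonneg k (by norm_num)
    have hmod : V ^ (k % 4) = U := by
      calc V ^ (k % 4) = V ^ (k % 4) * (V ^ (4 : ℤ)) ^ (k / 4) := by
            rw [h4, one_zpow, mul_one]
        _ = V ^ (k % 4 + 4 * (k / 4)) := by rw [← zpow_mul, ← zpow_add]
        _ = V ^ k := by rw [Int.emod_add_mul_ediv k 4]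
        _ = U := hVU
    refine key (k % 4).toNat (by omega) ?_
    rw [← zpow_natCast, Int.toNat_of_nonneg h0]
    exact hmod
end
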